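/- arXiv:math/0507142 — 4 statements merged into one kernel-verified Lean document; each statement's English description precedes it below -/
import Mathlib

section
/- In the stick percolation model, the percolation event E (that the union of the sticks contains a half-line) has probability 0 or 1: P(E) = 0 or P(E) = 1. -/
open MeasureTheory ProbabilityTheory

/-- The stick percolation model: i.i.d. exponential(lam) spacings `X i` between the
seeds, i.i.d. stick lengths `S i` with law `μ`, the two families being mutually
independent. -/
structure StickModel {Ω : Type} [MeasurableSpace Ω] (P : Measure Ω)
    (lam : ℝ) (μ : Measure ℝ) where
  X : ℕ → Ω → ℝ
  S : ℕ → Ω → ℝ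
  measX : ∀ i, Measurable (X i)
  measS : ∀ i, Measurable (S i)
  distX : ∀ i, P.map (X i) = expMeasure lam
  distS : ∀ i, P.map (S i) = μ
  indep : iIndepFun (Sum.elim X S) P

/-- The `n`-th seed `x_n = X_0 + ⋯ + X_n`. -/
noncomputable def StickModel.seed {Ω : Type} [MeasurableSpace Ω] {P : Measure Ω}
    {lam : ℝ} {μ : Measure ℝ} (M : StickModel P lam μ) (n : ℕ) (ω : Ω) : ℝ :=
  ∑ i ∈ Finset.range (n + 1), M.X i ω

/-- The percolation event: the union of the sticks `[x_n, x_n + S_n]` contains a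
half-line `[a, ∞)`. -/
def StickModel.Percolates {Ω : Type} [MeasurableSpace Ω] {P : Measure Ω}
    {lam : ℝ} {μ : Measure ℝ} (M : StickModel P lam μ) (ω : Ω) : Prop :=
  ∃ a : ℝ, Set.Ici a ⊆ ⋃ n : ℕ, Set.Icc (M.seed n ω) (M.seed n ω + M.S n ω)

section Aux

open Set Filter

/-- A countable combinatorial condition equivalent (for monotone seeds tending to
infinity) to the union of the sticks containing a half-line, using only the data
with index at least `n`. -/
def StickCond (x S : ℕ → ℝ) (n : ℕ) : Prop :=
  ∃ q : ℚ, x n ≤ (q : ℝ) ∧ ∀ k, n ≤ k →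
    (x (k + 1) ≤ (q : ℝ) ∨ ∃ j, n ≤ j ∧ j ≤ k ∧ x (k + 1) ≤ x j + S j)

lemma stickCond_shift {x x' S : ℕ → ℝ} {n : ℕ} {c : ℝ}
    (h : ∀ k, n ≤ k → x' k = x k + c) : StickCond x S n → StickCond x' S n := by
  rintro ⟨q, hq, hcond⟩
  obtain ⟨q', hq'⟩ := exists_rat_gt ((q : ℝ) + c)
  refine ⟨q', ?_, ?_⟩
  · rw [h n le_rfl]; push_cast; linarith
  · intro k hk
    rcases hcond k hk with h1 | ⟨j, hj1, hj2, hj3⟩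
    · left; rw [h (k + 1) (by omega)]; push_cast; linarith
    · right; exact ⟨j, hj1, hj2, by rw [h (k + 1) (by omega), h j hj1]; linarith⟩

lemma halfline_iff_stickCond {x S : ℕ → ℝ} (hmono : Monotone x)
    (htop : Tendsto x atTop atTop) (n : ℕ) :
    (∃ a : ℝ, Set.Ici a ⊆ ⋃ k, Set.Icc (x k) (x k + S k)) ↔ StickCond x S n := by
  classical
  constructor
  · rintro ⟨a, ha⟩
    set b : ℝ := (Finset.range (n + 1)).sup'
      (Finset.nonempty_range_iff.2 (Nat.succ_ne_zero n)) (fun j => x j + S j) with hb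
    obtain ⟨q, hq⟩ := exists_rat_gt (max (max a (x n)) b)
    have haq : a < (q : ℝ) := lt_of_le_of_lt ((le_max_left a (x n)).trans (le_max_left _ b)) hq
    have hxnq : x n < (q : ℝ) := lt_of_le_of_lt ((le_max_right a (x n)).trans (le_max_left _ b)) hq
    have hbq : b < (q : ℝ) := lt_of_le_of_lt (le_max_right _ b) hq
    refine ⟨q, hxnq.le, ?_⟩
    intro k hk
    by_contra hcon
    push_neg at hcon
    obtain ⟨h1, h2⟩ := hcon
    set c : ℝ := max (q : ℝ) ((Finset.range (k + 1)).sup'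
      (Finset.nonempty_range_iff.2 (Nat.succ_ne_zero k)) (fun j => x j + S j)) with hc
    have hck : c < x (k + 1) := by
      refine max_lt h1 ?_
      rw [Finset.sup'_lt_iff]
      intro j hj
      rw [Finset.mem_range] at hj
      rcases lt_or_ge j n with hjn | hjn
      · have hjb : x j + S j ≤ b :=
          Finset.le_sup' (fun j => x j + S j) (Finset.mem_range.2 (by omega))
        linarith
      · exact h2 j hjn (by omega)
    set y : ℝ := (c + x (k + 1)) / 2 with hy
    have hy1 : c < y := by rw [hy]; linarith
    have hy2 : y < x (k + 1) := by rw [hy]; linarith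
    have hqc : (q : ℝ) ≤ c := le_max_left _ _
    have hya : a ≤ y := by linarith
    obtain ⟨j, hjl, hjr⟩ := Set.mem_iUnion.1 (ha hya)
    rcases le_or_gt j k with hjk | hjk
    · have : x j + S j ≤ c := le_trans
        (Finset.le_sup' (fun j => x j + S j) (Finset.mem_range.2 (by omega)))
        (le_max_right _ _)
      linarith
    · have : x (k + 1) ≤ x j := hmono (by omega)
      linarith
  · rintro ⟨q, hq, hcond⟩
    refine ⟨q, fun y hy => ?_⟩
    rw [Set.mem_Ici] at hy
    obtain ⟨N, hN⟩ := Filter.eventually_atTop.1 (htop.eventually_gt_atTop y)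
    have hQn : n ≤ n ∧ x n ≤ y := ⟨le_rfl, hq.trans hy⟩
    have hnN : n ≤ N := by
      by_contra hcon
      push_neg at hcon
      exact absurd hQn.2 (not_le.2 (hN n (by omega)))
    obtain ⟨k0, hQk0, hk1⟩ : ∃ k0, (n ≤ k0 ∧ x k0 ≤ y) ∧ y < x (k0 + 1) := by
      refine ⟨Nat.findGreatest (fun k => n ≤ k ∧ x k ≤ y) N,
        Nat.findGreatest_spec (P := fun k => n ≤ k ∧ x k ≤ y) hnN hQn, ?_⟩
      rcases le_or_gt (Nat.findGreatest (fun k => n ≤ k ∧ x k ≤ y) N + 1) N with hle | hlt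
      · have hng := Nat.findGreatest_is_greatest (P := fun k => n ≤ k ∧ x k ≤ y)
          (Nat.lt_succ_self _) hle
        by_contra hy2
        push_neg at hy2
        exact hng ⟨Nat.le_succ_of_le (Nat.findGreatest_spec (P := fun k => n ≤ k ∧ x k ≤ y) hnN hQn).1, hy2⟩
      · exact hN _ (by omega)
    rcases hcond k0 hQk0.1 with h1 | ⟨j, hj1, hj2, hj3⟩
    · exfalso; linarith [hQn.2, hq]
    · exact Set.mem_iUnion.2 ⟨j, ⟨(hmono hj2).trans hQk0.2, by linarith⟩⟩

lemma measurableSet_stickCond {Ω : Type} [m : MeasurableSpace Ω] (x : ℕ → Ω → ℝ)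
    (S : ℕ → Ω → ℝ) (n : ℕ) (hx : ∀ k, Measurable (x k))
    (hS : ∀ j, n ≤ j → Measurable (S j)) :
    MeasurableSet {ω | StickCond (fun k => x k ω) (fun j => S j ω) n} := by
  have hset : {ω | StickCond (fun k => x k ω) (fun j => S j ω) n} =
      ⋃ q : ℚ, ({ω | x n ω ≤ (q : ℝ)} ∩ ⋂ k, ⋂ (_ : n ≤ k),
        ({ω | x (k + 1) ω ≤ (q : ℝ)} ∪ ⋃ j, ⋃ (_ : n ≤ j), ⋃ (_ : j ≤ k),
          {ω | x (k + 1) ω ≤ x j ω + S j ω})) := by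
    ext ω
    simp only [StickCond, Set.mem_setOf_eq, Set.mem_iUnion, Set.mem_inter_iff,
      Set.mem_iInter, Set.mem_union, exists_prop]
  rw [hset]
  refine MeasurableSet.iUnion fun q => MeasurableSet.inter ?_ ?_
  · exact measurableSet_le (hx n) measurable_const
  · refine MeasurableSet.iInter fun k => MeasurableSet.iInter fun hk =>
      MeasurableSet.union ?_ ?_
    · exact measurableSet_le (hx (k + 1)) measurable_const
    · exact MeasurableSet.iUnion fun j => MeasurableSet.iUnion fun hj =>
        MeasurableSet.iUnion fun hjk =>
          measurableSet_le (hx (k + 1)) ((hx j).add (hS j hj))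

lemma iIndep_mono' {Ω ι : Type*} {mΩ : MeasurableSpace Ω} {μ : Measure Ω}
    {m m' : ι → MeasurableSpace Ω} (h : iIndep m μ) (hle : ∀ i, m' i ≤ m i) :
    iIndep m' μ := by
  rw [iIndep_iff] at h ⊢
  intro t f hf
  exact h t fun i hi => hle i _ (hf i hi)

end Aux

/-- The percolation event has probability zero or one. -/
theorem stick_percolation_zero_one {Ω : Type} [MeasurableSpace Ω] (P : Measure Ω)
    [IsProbabilityMeasure P] (lam : ℝ) (hlam : 0 < lam) (μ : Measure ℝ)
    [IsProbabilityMeasure μ] (hμ : μ (Set.Ioi (0 : ℝ)) = 1)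
    (M : StickModel P lam μ) :
    P {ω | M.Percolates ω} = 0 ∨ P {ω | M.Percolates ω} = 1 := by
  classical
  -- the σ-algebra generated by `(X n, S n)`
  set π : ℕ → Set (Set Ω) := fun n =>
    {u | ∃ A B : Set ℝ, MeasurableSet A ∧ MeasurableSet B ∧
      u = M.X n ⁻¹' A ∩ M.S n ⁻¹' B} with hπ
  set s : ℕ → MeasurableSpace Ω := fun n => MeasurableSpace.generateFrom (π n) with hs
  have h_le : ∀ n, s n ≤ ‹MeasurableSpace Ω› := by
    intro n
    refine MeasurableSpace.generateFrom_le ?_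
    rintro u ⟨A, B, hA, hB, rfl⟩
    exact ((M.measX n) hA).inter ((M.measS n) hB)
  have hXmem : ∀ n (A : Set ℝ), MeasurableSet A → MeasurableSet[s n] (M.X n ⁻¹' A) := by
    intro n A hA
    refine MeasurableSpace.measurableSet_generateFrom ?_
    exact ⟨A, Set.univ, hA, MeasurableSet.univ, by simp⟩
  have hSmem : ∀ n (B : Set ℝ), MeasurableSet B → MeasurableSet[s n] (M.S n ⁻¹' B) := by
    intro n B hB
    refine MeasurableSpace.measurableSet_generateFrom ?_
    exact ⟨Set.univ, B, MeasurableSet.univ, hB, by simp⟩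
  have hpairmeas : ∀ j : Sum ℕ ℕ, Measurable (Sum.elim M.X M.S j) := by
    rintro (i | i)
    exacts [M.measX i, M.measS i]
  -- independence of the σ-algebras
  have hindep : iIndep s P := by
    refine iIndepSets.iIndep h_le π (fun n => ?_) (fun n => rfl) ?_
    · rintro u ⟨A, B, hA, hB, rfl⟩ v ⟨A', B', hA', hB', rfl⟩ -
      exact ⟨A ∩ A', B ∩ B', hA.inter hA', hB.inter hB',
        by rw [Set.preimage_inter, Set.preimage_inter, Set.inter_inter_inter_comm]⟩
    · rw [iIndepSets_iff]
      intro t f hf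
      have hchoice : ∀ i : ℕ, ∃ A B : Set ℝ, MeasurableSet A ∧ MeasurableSet B ∧
          (i ∈ t → f i = M.X i ⁻¹' A ∩ M.S i ⁻¹' B) := by
        intro i
        by_cases hi : i ∈ t
        · obtain ⟨A, B, hA, hB, hfi⟩ := hf i hi
          exact ⟨A, B, hA, hB, fun _ => hfi⟩
        · exact ⟨Set.univ, Set.univ, MeasurableSet.univ, MeasurableSet.univ,
            fun h => absurd h hi⟩
      choose A B hA hB hf' using hchoice
      have hXS : ∀ i, P (M.X i ⁻¹' A i ∩ M.S i ⁻¹' B i)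
          = P (M.X i ⁻¹' A i) * P (M.S i ⁻¹' B i) := by
        intro i
        have h2 : IndepFun (M.X i) (M.S i) P :=
          M.indep.indepFun (i := Sum.inl i) (j := Sum.inr i) (by simp)
        exact (indepFun_iff_measure_inter_preimage_eq_mul.1 h2) _ _ (hA i) (hB i)
      set t2 : Finset (ℕ ⊕ ℕ) := t.image Sum.inl ∪ t.image Sum.inr with ht2
      have hdisj : Disjoint (t.image Sum.inl) (t.image Sum.inr) := by
        simp [Finset.disjoint_left]
      have hsets : ∀ j ∈ t2, MeasurableSet (Sum.elim A B j) := by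
        rintro (i | i) _
        exacts [hA i, hB i]
      have key := M.indep.measure_inter_preimage_eq_mul t2 (sets := Sum.elim A B) hsets
      have hInter : (⋂ j ∈ t2, Sum.elim M.X M.S j ⁻¹' Sum.elim A B j) = ⋂ i ∈ t, f i := by
        ext ω
        simp only [ht2, Finset.mem_union, Finset.mem_image, Set.mem_iInter,
          Set.mem_preimage]
        constructor
        · intro h i hi
          rw [hf' i hi]
          exact ⟨h (Sum.inl i) (Or.inl ⟨i, hi, rfl⟩), h (Sum.inr i) (Or.inr ⟨i, hi, rfl⟩)⟩
        · rintro h j (⟨i, hi, rfl⟩ | ⟨i, hi, rfl⟩)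
          · have hmem := h i hi
            rw [hf' i hi] at hmem
            exact hmem.1
          · have hmem := h i hi
            rw [hf' i hi] at hmem
            exact hmem.2
      have hProd : (∏ j ∈ t2, P (Sum.elim M.X M.S j ⁻¹' Sum.elim A B j))
          = ∏ i ∈ t, P (f i) := by
        rw [ht2, Finset.prod_union hdisj,
          Finset.prod_image (fun x _ y _ h => Sum.inl.inj h),
          Finset.prod_image (fun x _ y _ h => Sum.inr.inj h),
          ← Finset.prod_mul_distrib]
        refine Finset.prod_congr rfl fun i hi => ?_
        rw [hf' i hi]
        exact (hXS i).symm
      rw [← hInter, ← hProd]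
      exact key
  -- measurability of `X i` and `S i` with respect to `s i`
  have hXs : ∀ i, Measurable[s i] (M.X i) := fun i A hA => hXmem i A hA
  have hSs : ∀ i, Measurable[s i] (M.S i) := fun i B hB => hSmem i B hB
  -- the tail approximation events
  set T : ℕ → Set Ω := fun n =>
    {ω | StickCond (fun k => ∑ i ∈ Finset.Icc n k, M.X i ω) (fun j => M.S j ω) n} with hT
  set Tset : Set Ω := ⋃ m, ⋂ k, ⋂ (_ : m ≤ k), T k with hTset
  have hTmeas : ∀ n k, n ≤ k → MeasurableSet[⨆ i, ⨆ (_ : n ≤ i), s i] (T k) := by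
    intro n k hnk
    have hle2 : ∀ i, n ≤ i → s i ≤ ⨆ i, ⨆ (_ : n ≤ i), s i := fun i hi =>
      le_iSup₂ (f := fun i (_ : n ≤ i) => s i) i hi
    refine measurableSet_stickCond (m := ⨆ i, ⨆ (_ : n ≤ i), s i)
      (fun k' ω => ∑ i ∈ Finset.Icc k k', M.X i ω) (fun j ω => M.S j ω) k ?_ ?_
    · intro k'
      refine Finset.measurable_sum _ fun i hi => ?_
      have hni : n ≤ i := hnk.trans (Finset.mem_Icc.1 hi).1
      exact (hXs i).mono (hle2 i hni) le_rfl
    · intro j hj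
      exact (hSs j).mono (hle2 j (hnk.trans hj)) le_rfl
  have htail : MeasurableSet[Filter.limsup s Filter.atTop] Tset := by
    rw [Filter.limsup_eq_iInf_iSup_of_nat, MeasurableSpace.measurableSet_iInf]
    intro n
    have hTeq : Tset = ⋃ m, ⋂ k, ⋂ (_ : max m n ≤ k), T k := by
      apply Set.Subset.antisymm
      · refine Set.iUnion_subset fun m => Set.subset_iUnion_of_subset m ?_
        intro ω hω
        simp only [Set.mem_iInter] at hω ⊢
        intro k hk
        exact hω k (le_trans (le_max_left m n) hk)
      · refine Set.iUnion_subset fun m => Set.subset_iUnion_of_subset (max m n) ?_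
        intro ω hω
        simp only [Set.mem_iInter] at hω ⊢
        intro k hk
        exact hω k hk
    rw [hTeq]
    refine MeasurableSet.iUnion fun m => MeasurableSet.iInter fun k =>
      MeasurableSet.iInter fun hk => hTmeas n k (le_trans (le_max_right m n) hk)
  have hzo := measure_zero_or_one_of_measurableSet_limsup_atTop h_le hindep htail
  -- distributional facts
  have hexp : ∀ x : ℝ, expMeasure lam (Set.Iic x)
      = ENNReal.ofReal (if 0 ≤ x then 1 - Real.exp (-(lam * x)) else 0) := by
    intro x
    have h1 : IsProbabilityMeasure (expMeasure lam) := isProbabilityMeasure_expMeasure hlam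
    have h2 : cdf (expMeasure lam) x = if 0 ≤ x then 1 - Real.exp (-(lam * x)) else 0 :=
      cdf_expMeasure_eq hlam x
    rw [cdf_eq_real, measureReal_def] at h2
    rw [← h2, ENNReal.ofReal_toReal (measure_ne_top _ _)]
  have hmap : ∀ i (A : Set ℝ), MeasurableSet A → P (M.X i ⁻¹' A) = expMeasure lam A := by
    intro i A hA
    rw [← M.distX i, Measure.map_apply (M.measX i) hA]
  have hX0 : ∀ᵐ ω ∂P, ∀ i, 0 < M.X i ω := by
    rw [ae_all_iff]
    intro i
    rw [ae_iff]
    have h3 : {ω | ¬ 0 < M.X i ω} = M.X i ⁻¹' Set.Iic 0 := by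
      ext ω; simp [not_lt]
    rw [h3, hmap i _ measurableSet_Iic, hexp 0]
    simp
  -- Borel–Cantelli: infinitely many `X i ≥ 1`
  set Aset : ℕ → Set Ω := fun i => M.X i ⁻¹' Set.Ici 1 with hAset
  have hAmeas : ∀ i, MeasurableSet (Aset i) := fun i => (M.measX i) measurableSet_Ici
  have hAindep : iIndepSet Aset P := by
    rw [iIndepSet_iff_iIndep]
    refine iIndep_mono' hindep fun i => ?_
    refine MeasurableSpace.generateFrom_le ?_
    rintro u rfl
    exact hXmem i _ measurableSet_Ici
  have hsum : (∑' i : ℕ, P (Aset i)) = ⊤ := by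
    have hone : ∀ i, P (Aset i) = expMeasure lam (Set.Ici 1) := fun i =>
      hmap i _ measurableSet_Ici
    have h1 : IsProbabilityMeasure (expMeasure lam) := isProbabilityMeasure_expMeasure hlam
    have hpos : expMeasure lam (Set.Ici 1) ≠ 0 := by
      have hcompl : expMeasure lam (Set.Ioi 1)
          = 1 - ENNReal.ofReal (1 - Real.exp (-(lam * 1))) := by
        rw [← Set.compl_Iic, measure_compl measurableSet_Iic (measure_ne_top _ _),
          measure_univ, hexp 1]
        simp
      intro h0
      have hsub : expMeasure lam (Set.Ioi 1) ≤ expMeasure lam (Set.Ici 1) :=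
        measure_mono Set.Ioi_subset_Ici_self
      rw [h0, le_zero_iff] at hsub
      rw [hcompl, tsub_eq_zero_iff_le] at hsub
      have hlt : ENNReal.ofReal (1 - Real.exp (-(lam * 1))) < 1 :=
        ENNReal.ofReal_lt_one.2 (by linarith [Real.exp_pos (-(lam * 1))])
      exact absurd hsub (not_le.2 hlt)
    calc (∑' i : ℕ, P (Aset i)) = ∑' _ : ℕ, expMeasure lam (Set.Ici 1) := by
          exact tsum_congr hone
      _ = ⊤ := ENNReal.tsum_const_eq_top_of_ne_zero hpos
  have hlimsup := measure_limsup_eq_one hAmeas hAindep hsum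
  have hfreq : ∀ᵐ ω ∂P, ∃ᶠ i in Filter.atTop, 1 ≤ M.X i ω := by
    have hms : MeasurableSet (Filter.limsup Aset Filter.atTop) :=
      MeasurableSet.measurableSet_limsup hAmeas
    have hmem : ∀ᵐ ω ∂P, ω ∈ Filter.limsup Aset Filter.atTop := by
      rw [ae_iff]
      have h4 : {ω | ¬ ω ∈ Filter.limsup Aset Filter.atTop}
          = (Filter.limsup Aset Filter.atTop)ᶜ := rfl
      rw [h4, measure_compl hms (measure_ne_top _ _), measure_univ, hlimsup, tsub_self]
    filter_upwards [hmem] with ω hω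
    have h5 := Filter.mem_limsup_iff_frequently_mem.1 hω
    simpa [hAset, Set.mem_preimage, Set.mem_Ici] using h5
  -- a.s. the seeds tend to infinity
  have hseedmono : ∀ ω, (∀ i, 0 < M.X i ω) → Monotone fun n => M.seed n ω := by
    intro ω h1
    refine monotone_nat_of_le_succ fun k => ?_
    refine Finset.sum_le_sum_of_subset_of_nonneg ?_ fun i _ _ => (h1 i).le
    exact Finset.range_subset_range.2 (by omega)
  have htend : ∀ᵐ ω ∂P, Filter.Tendsto (fun n => M.seed n ω) Filter.atTop Filter.atTop := by
    filter_upwards [hX0, hfreq] with ω h1 h2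
    refine Filter.tendsto_atTop_atTop_of_monotone (hseedmono ω h1) ?_
    intro b
    have hinf : {i : ℕ | 1 ≤ M.X i ω}.Infinite := Nat.frequently_atTop_iff_infinite.1 h2
    obtain ⟨J, hJsub, hJcard⟩ := hinf.exists_subset_card_eq ⌈b⌉₊
    refine ⟨J.sup id, ?_⟩
    have hJsubset : J ⊆ Finset.range (J.sup id + 1) := by
      intro i hi
      exact Finset.mem_range.2 (Nat.lt_succ_of_le (Finset.le_sup (f := id) hi))
    have hstep1 : (J.card : ℝ) ≤ ∑ i ∈ J, M.X i ω := by
      calc (J.card : ℝ) = ∑ _i ∈ J, (1 : ℝ) := by simp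
        _ ≤ ∑ i ∈ J, M.X i ω := Finset.sum_le_sum fun i hi => hJsub hi
    have hstep2 : (∑ i ∈ J, M.X i ω) ≤ M.seed (J.sup id) ω :=
      Finset.sum_le_sum_of_subset_of_nonneg hJsubset fun i _ _ => (h1 i).le
    have hstep0 : b ≤ (J.card : ℝ) := by
      rw [hJcard]
      exact (Nat.le_ceil b).trans (by norm_num)
    linarith
  -- splitting the seed sums
  have hsplit : ∀ (n k : ℕ), n ≤ k → ∀ ω : Ω,
      (∑ i ∈ Finset.Icc n k, M.X i ω)
        = M.seed k ω + -(∑ i ∈ Finset.range n, M.X i ω) := by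
    intro n k hnk ω
    have h6 : (∑ i ∈ Finset.range n, M.X i ω) + ∑ i ∈ Finset.Icc n k, M.X i ω
        = M.seed k ω := by
      rw [StickModel.seed, Finset.range_eq_Ico, Finset.range_eq_Ico, ← Finset.Ico_add_one_right_eq_Icc]
      exact Finset.sum_Ico_consecutive (fun i => M.X i ω) (Nat.zero_le n) (by omega)
    linarith
  -- the percolation event is a.e. equal to the tail event
  have hmain : {ω | M.Percolates ω} =ᵐ[P] Tset := by
    refine Filter.eventuallyEq_set.2 ?_
    filter_upwards [hX0, htend] with ω h1 h2
    have hiff : ∀ n, M.Percolates ω ↔ ω ∈ T n := by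
      intro n
      have h3 := halfline_iff_stickCond (x := fun k => M.seed k ω)
        (S := fun k => M.S k ω) (hseedmono ω h1) h2 n
      constructor
      · intro hp
        have hc := h3.1 hp
        exact stickCond_shift (x := fun k => M.seed k ω)
          (x' := fun k => ∑ i ∈ Finset.Icc n k, M.X i ω)
          (c := -(∑ i ∈ Finset.range n, M.X i ω)) (fun k hk => hsplit n k hk ω) hc
      · intro ht
        refine h3.2 (stickCond_shift (x := fun k => ∑ i ∈ Finset.Icc n k, M.X i ω)
          (x' := fun k => M.seed k ω) (c := ∑ i ∈ Finset.range n, M.X i ω)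
          (fun k hk => by have := hsplit n k hk ω; linarith) ht)
    constructor
    · intro hp
      exact Set.mem_iUnion.2 ⟨0, Set.mem_iInter.2 fun k =>
        Set.mem_iInter.2 fun _ => (hiff k).1 hp⟩
    · intro ht
      obtain ⟨m, hm⟩ := Set.mem_iUnion.1 ht
      exact (hiff m).2 (Set.mem_iInter.1 (Set.mem_iInter.1 hm m) le_rfl)
  rw [measure_congr hmain]
  exact hzo
end

section
/- In the stick percolation model, the following two events coincide up to a set of probability zero: (i) the event E that ⋃_n Ŝ_n contains a half-line [a,∞) for some a ∈ ℝ; (ii) the event E′ that there exists a strictly increasing sequence (n_k)_{k∈ℕ} of indices with x_{n_{k+1}} < x_{n_k} + S_{n_k} for every k (an infinite chain of pairwise connected sticks). That is, P(E Δ E′) = 0. -/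
open MeasureTheory ProbabilityTheory

section Aux

open Filter Set

/-- Deterministic core lemma: under typical conditions (positive spacings and lengths,
seeds tending to infinity, no seed coinciding with a right endpoint), coverage of a
half-line is equivalent to the existence of an infinite chain of connected sticks. -/
lemma stick_core (x s : ℕ → ℝ) (hx : StrictMono x) (hs : ∀ n, 0 < s n)
    (hxt : Tendsto x atTop atTop)
    (hne : ∀ m j, m < j → x j ≠ x m + s m) :
    (∃ a : ℝ, Ici a ⊆ ⋃ n, Icc (x n) (x n + s n)) ↔
      ∃ f : ℕ → ℕ, StrictMono f ∧ ∀ k, x (f (k + 1)) < x (f k) + s (f k) := by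
  classical
  have hne' : ∀ m j, x j ≠ x m + s m := by
    intro m j
    rcases lt_trichotomy m j with h | rfl | h
    · exact hne m j h
    · have := hs m; intro he; linarith
    · have h1 : x j < x m := hx h
      have := hs m; intro he; linarith
  constructor
  · rintro ⟨a, ha⟩
    have amax : ∀ c : ℝ, ∀ n0 : ℕ, x n0 ≤ c →
        ∃ n, x n ≤ c ∧ ∀ m, x m ≤ c → x m + s m ≤ x n + s n := by
      intro c n0 hn0
      obtain ⟨q, hq⟩ := (hxt.eventually_gt_atTop c).exists_forall_of_atTop
      have hmem : ∀ m, x m ≤ c → m ∈ (Finset.range q).filter (fun m => x m ≤ c) := by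
        intro m hm
        refine Finset.mem_filter.mpr ⟨Finset.mem_range.mpr ?_, hm⟩
        by_contra h
        exact absurd hm (not_le.mpr (hq m (not_lt.mp h)))
      obtain ⟨n, hn, hnmax⟩ := Finset.exists_max_image _ (fun m => x m + s m)
        ⟨n0, hmem n0 hn0⟩
      exact ⟨n, (Finset.mem_filter.mp hn).2, fun m hm => hnmax m (hmem m hm)⟩
    have step : ∀ n r, a ≤ r → x n ≤ r → r < x n + s n →
        (∀ m, x m ≤ r → x m + s m ≤ x n + s n) →
        ∃ n', n < n' ∧ x n' < x n + s n ∧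
          (a ≤ x n + s n ∧ x n' ≤ x n + s n ∧ x n + s n < x n' + s n' ∧
            ∀ m, x m ≤ x n + s n → x m + s m ≤ x n' + s n') := by
      intro n r har hxr hrt hinv
      set t := x n + s n with htdef
      have hqex : ∃ m, t < x m := (hxt.eventually_gt_atTop t).exists
      set q := Nat.find hqex with hqdef
      have hq : t < x q := Nat.find_spec hqex
      set u := t + (x q - t) / 2 with hudef
      have hut : t < u := by simp only [hudef]; linarith
      have huq : u < x q := by simp only [hudef]; linarith
      have hau : a ≤ u := by linarith
      obtain ⟨j, hj⟩ : ∃ j, u ∈ Icc (x j) (x j + s j) := by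
        simpa using ha hau
      have hjt : x j ≤ t := by
        by_contra h
        have hqj : q ≤ j := Nat.find_min' hqex (not_le.mp h)
        have : x q ≤ x j := hx.monotone hqj
        have : x j ≤ u := hj.1
        linarith
      have hjlong : t < x j + s j := lt_of_lt_of_le hut hj.2
      obtain ⟨n', hn'le, hn'max⟩ := amax t j hjt
      have h1 : t < x n' + s n' := lt_of_lt_of_le hjlong (hn'max j hjt)
      have h2 : x n' < t := lt_of_le_of_ne hn'le (hne' n n')
      have h3 : n < n' := by
        have hr' : r < x n' := by
          by_contra h
          exact absurd (hinv n' (not_lt.mp h)) (not_le.mpr h1)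
        exact hx.lt_iff_lt.mp (lt_of_le_of_lt hxr hr')
      exact ⟨n', h3, h2, le_trans har hrt.le, hn'le, h1, hn'max⟩
    obtain ⟨N, hN⟩ := (hxt.eventually_ge_atTop a).exists
    obtain ⟨n0, hn0le, hn0max⟩ := amax (x N) N le_rfl
    have hbase : a ≤ x N ∧ x n0 ≤ x N ∧ x N < x n0 + s n0 ∧
        ∀ m, x m ≤ x N → x m + s m ≤ x n0 + s n0 := by
      refine ⟨hN, hn0le, ?_, hn0max⟩
      have := hn0max N le_rfl
      have := hs N
      linarith
    let St : ℕ × ℝ → Prop := fun p =>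
      a ≤ p.2 ∧ x p.1 ≤ p.2 ∧ p.2 < x p.1 + s p.1 ∧
        ∀ m, x m ≤ p.2 → x m + s m ≤ x p.1 + s p.1
    have next : ∀ p : {p : ℕ × ℝ // St p}, ∃ p' : {p : ℕ × ℝ // St p},
        p.1.1 < p'.1.1 ∧ x p'.1.1 < x p.1.1 + s p.1.1 := by
      rintro ⟨⟨n, r⟩, h⟩
      obtain ⟨n', hlt, hcon, hst⟩ := step n r h.1 h.2.1 h.2.2.1 h.2.2.2
      exact ⟨⟨(n', x n + s n), hst⟩, hlt, hcon⟩
    let g : ℕ → {p : ℕ × ℝ // St p} := fun k =>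
      Nat.rec ⟨(n0, x N), hbase⟩ (fun _ p => Classical.choose (next p)) k
    have hgsucc : ∀ k, g (k + 1) = Classical.choose (next (g k)) := fun k => rfl
    refine ⟨fun k => (g k).1.1, strictMono_nat_of_lt_succ fun k => ?_, fun k => ?_⟩
    · rw [hgsucc k]; exact (Classical.choose_spec (next (g k))).1
    · show x ((g (k+1)).1.1) < x ((g k).1.1) + s ((g k).1.1)
      rw [hgsucc k]; exact (Classical.choose_spec (next (g k))).2
  · rintro ⟨f, hf, hchain⟩
    refine ⟨x (f 0), fun t ht => ?_⟩
    have hxf : Tendsto (fun k => x (f k)) atTop atTop := hxt.comp hf.tendsto_atTop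
    have hqex : ∃ k, t < x (f k) := (hxf.eventually_gt_atTop t).exists
    have hq0 : Nat.find hqex ≠ 0 := by
      intro h
      have := Nat.find_spec hqex
      rw [h] at this
      exact absurd ht (not_le.mpr this)
    obtain ⟨k, hk⟩ := Nat.exists_eq_succ_of_ne_zero hq0
    have h1 : ¬ t < x (f k) := Nat.find_min hqex (by omega)
    have h2 : t < x (f (k + 1)) := by rw [← Nat.succ_eq_add_one, ← hk]; exact Nat.find_spec hqex
    exact mem_iUnion.mpr ⟨f k, not_lt.mp h1, le_of_lt (lt_trans h2 (hchain k))⟩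

lemma expMeasure_Iic' {r : ℝ} (hr : 0 < r) (x : ℝ) :
    expMeasure r (Iic x) = ENNReal.ofReal (if 0 ≤ x then 1 - Real.exp (-(r * x)) else 0) := by
  rw [expMeasure, gammaMeasure, withDensity_apply _ measurableSet_Iic]
  exact lintegral_exponentialPDF_eq_antiDeriv hr x

lemma expMeasure_singleton' {r : ℝ} (w : ℝ) : expMeasure r {w} = 0 := by
  rw [expMeasure, gammaMeasure]
  exact withDensity_absolutelyContinuous _ _ (measure_singleton w)

end Aux

open Filter Set in
/-- Up to a set of probability zero, the event that the union of the sticks contains a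
half-line coincides with the event that there is an infinite chain of pairwise
connected sticks. -/
theorem stick_percolation_eq_chain_ae {Ω : Type} [MeasurableSpace Ω] (P : Measure Ω)
    [IsProbabilityMeasure P] (lam : ℝ) (hlam : 0 < lam) (μ : Measure ℝ)
    [IsProbabilityMeasure μ] (hμ : μ (Set.Ioi (0 : ℝ)) = 1)
    (M : StickModel P lam μ) :
    P (symmDiff {ω | M.Percolates ω}
        {ω | ∃ f : ℕ → ℕ, StrictMono f ∧
          ∀ k : ℕ, M.seed (f (k + 1)) ω < M.seed (f k) ω + M.S (f k) ω}) = 0 := by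
  classical
  -- positivity of the spacings
  have hX0 : ∀ i, ∀ᵐ ω ∂P, 0 < M.X i ω := by
    intro i
    rw [ae_iff]
    have hset : {ω | ¬ 0 < M.X i ω} = M.X i ⁻¹' Set.Iic 0 := by ext ω; simp [not_lt]
    rw [hset, ← Measure.map_apply (M.measX i) measurableSet_Iic, M.distX i,
      expMeasure_Iic' hlam]
    simp
  -- positivity of the stick lengths
  have hS0 : ∀ i, ∀ᵐ ω ∂P, 0 < M.S i ω := by
    intro i
    rw [ae_iff]
    have hset : {ω | ¬ 0 < M.S i ω} = M.S i ⁻¹' Set.Iic 0 := by ext ω; simp [not_lt]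
    have h2 := measure_compl (measurableSet_Ioi (a := (0 : ℝ))) (measure_ne_top μ _)
    rw [hμ, Set.compl_Ioi] at h2
    rw [hset, ← Measure.map_apply (M.measS i) measurableSet_Iic, M.distS i, h2]
    simp
  -- no seed ever coincides with a right endpoint of an earlier stick
  have hneq : ∀ m j : ℕ, m < j → ∀ᵐ ω ∂P, M.seed j ω ≠ M.seed m ω + M.S m ω := by
    intro m j hmj
    rw [ae_iff]
    set R : Ω → ℝ := fun ω => ∑ i ∈ Finset.Ico (m + 1) j, M.X i ω with hR
    have hRm : Measurable R := Finset.measurable_sum _ fun i _ => M.measX i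
    set W : Ω → ℝ := fun ω => M.S m ω - R ω with hWdef
    have hWm : Measurable W := (M.measS m).sub hRm
    have hsplit : ∀ ω, M.seed j ω = M.seed m ω + R ω + M.X j ω := by
      intro ω
      have h1 : M.seed j ω = M.seed m ω + ∑ i ∈ Finset.Ico (m + 1) (j + 1), M.X i ω := by
        rw [StickModel.seed, StickModel.seed, Finset.range_eq_Ico,
          ← Finset.sum_Ico_consecutive _ (Nat.zero_le (m + 1)) (by omega : m + 1 ≤ j + 1), Finset.range_eq_Ico]
      rw [h1, Finset.sum_Ico_succ_top (by omega : m + 1 ≤ j), hR]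
      ring
    have hev : {ω | ¬ M.seed j ω ≠ M.seed m ω + M.S m ω}
        = (fun ω => (W ω, M.X j ω)) ⁻¹' {p : ℝ × ℝ | p.2 = p.1} := by
      ext ω
      simp only [not_not, mem_setOf_eq, mem_preimage]
      constructor
      · intro h; have := hsplit ω; show M.X j ω = W ω; simp only [hWdef]; linarith
      · intro h; have h' : M.X j ω = W ω := h; simp only [hWdef] at h'
        have := hsplit ω; linarith
    have hind : IndepFun W (M.X j) P := by
      set e : ℕ ↪ ℕ ⊕ ℕ := ⟨Sum.inl, Sum.inl_injective⟩ with he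
      set A : Finset (ℕ ⊕ ℕ) := insert (Sum.inr m) ((Finset.Ico (m + 1) j).map e) with hA
      have hdisj : Disjoint A ({Sum.inl j} : Finset (ℕ ⊕ ℕ)) := by
        simp only [Finset.disjoint_singleton_right, hA, Finset.mem_insert, Finset.mem_map, he,
          Function.Embedding.coeFn_mk]
        push_neg
        refine ⟨by simp, ?_⟩
        intro i hi h
        have := Sum.inl.inj h
        simp only [Finset.mem_Ico] at hi; omega
      have hFm : ∀ i, Measurable (Sum.elim M.X M.S i) := by
        rintro (i | i)
        exacts [M.measX i, M.measS i]
      have h1 := M.indep.indepFun_finset A {Sum.inl j} hdisj hFm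
      have hmemr : (Sum.inr m : ℕ ⊕ ℕ) ∈ A := Finset.mem_insert_self _ _
      have hmeml : ∀ i : (Finset.Ico (m + 1) j), (Sum.inl i.1 : ℕ ⊕ ℕ) ∈ A := by
        intro i
        exact Finset.mem_insert_of_mem (Finset.mem_map.mpr ⟨i.1, i.2, rfl⟩)
      set φ : ((i : A) → ℝ) → ℝ := fun v =>
        v ⟨Sum.inr m, hmemr⟩ - ∑ i ∈ (Finset.Ico (m + 1) j).attach, v ⟨Sum.inl i.1, hmeml i⟩
        with hφ
      have hφm : Measurable φ := by
        apply Measurable.sub (measurable_pi_apply _)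
        exact Finset.measurable_sum _ fun i _ => measurable_pi_apply _
      set ψ : ((i : ({Sum.inl j} : Finset (ℕ ⊕ ℕ))) → ℝ) → ℝ := fun v =>
        v ⟨Sum.inl j, Finset.mem_singleton_self _⟩ with hψ
      have hψm : Measurable ψ := measurable_pi_apply _
      have h2 := h1.comp hφm hψm
      have hWeq : W = fun ω => φ (fun i : A => Sum.elim M.X M.S i ω) := by
        funext ω
        simp only [hφ, hWdef, hR, Sum.elim_inr, Sum.elim_inl]
        rw [Finset.sum_attach (Finset.Ico (m + 1) j) (fun i => M.X i ω)]
      have hXeq : M.X j = fun ω => ψ (fun i : ({Sum.inl j} : Finset (ℕ ⊕ ℕ)) =>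
          Sum.elim M.X M.S i ω) := by
        funext ω; simp [hψ]
      rw [hWeq, hXeq]
      exact h2
    have hpair : Measurable fun ω => (W ω, M.X j ω) := hWm.prodMk (M.measX j)
    have hdiag : MeasurableSet {p : ℝ × ℝ | p.2 = p.1} :=
      measurableSet_eq_fun measurable_snd measurable_fst
    haveI : IsProbabilityMeasure (expMeasure lam) := isProbabilityMeasure_expMeasure hlam
    rw [hev, ← Measure.map_apply hpair hdiag,
      (indepFun_iff_map_prod_eq_prod_map_map hWm.aemeasurable (M.measX j).aemeasurable).mp hind,
      M.distX j, Measure.prod_apply hdiag]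
    have hfib : ∀ w : ℝ, (Prod.mk w ⁻¹' {p : ℝ × ℝ | p.2 = p.1}) = {w} := by
      intro w; ext z; simp [eq_comm]
    simp only [hfib, expMeasure_singleton', lintegral_zero]
  have hneq' : ∀ᵐ ω ∂P, ∀ m j : ℕ, m < j → M.seed j ω ≠ M.seed m ω + M.S m ω := by
    refine ae_all_iff.mpr fun m => ae_all_iff.mpr fun j => ?_
    by_cases h : m < j
    · exact (hneq m j h).mono fun ω hω _ => hω
    · exact ae_of_all _ fun ω hmj => absurd hmj h
  -- the seeds tend to infinity
  have hTend : ∀ᵐ ω ∂P, (∀ i, 0 < M.X i ω) →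
      Tendsto (fun n => M.seed n ω) atTop atTop := by
    have hlt1 : ∀ C : ℕ, expMeasure lam (Iic (C : ℝ)) < 1 := by
      intro C
      rw [expMeasure_Iic' hlam, if_pos (Nat.cast_nonneg C)]
      refine ENNReal.ofReal_lt_one.mpr ?_
      have := Real.exp_pos (-(lam * C)); linarith
    have prodbound : ∀ (C : ℝ) (n : ℕ),
        P (⋂ i ∈ Finset.range (n + 1), M.X i ⁻¹' Iic C)
          = (expMeasure lam (Iic C)) ^ (n + 1) := by
      intro C n
      set e : ℕ ↪ ℕ ⊕ ℕ := ⟨Sum.inl, Sum.inl_injective⟩ with he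
      have h := M.indep.measure_inter_preimage_eq_mul
        ((Finset.range (n + 1)).map e) (sets := fun _ => Iic C) (fun i _ => measurableSet_Iic)
      have hset : (⋂ i ∈ (Finset.range (n + 1)).map e, Sum.elim M.X M.S i ⁻¹' Iic C)
          = ⋂ i ∈ Finset.range (n + 1), M.X i ⁻¹' Iic C := by
        ext ω
        simp only [Set.mem_iInter, Finset.mem_map, he, Function.Embedding.coeFn_mk]
        constructor
        · intro h i hi; exact h (Sum.inl i) ⟨i, hi, rfl⟩
        · rintro h i ⟨k, hk, rfl⟩; exact h k hk
      rw [hset, Finset.prod_map] at h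
      rw [h]
      have : ∀ i ∈ Finset.range (n + 1),
          P (Sum.elim M.X M.S (e i) ⁻¹' Iic C) = expMeasure lam (Iic C) := by
        intro i _
        show P (M.X i ⁻¹' Iic C) = _
        rw [← Measure.map_apply (M.measX i) measurableSet_Iic, M.distX i]
      rw [Finset.prod_congr rfl this, Finset.prod_const, Finset.card_range]
    have hCzero : ∀ C : ℕ,
        P ({ω | ∀ i, 0 < M.X i ω} ∩ ⋂ n : ℕ, {ω | M.seed n ω ≤ (C : ℝ)}) = 0 := by
      intro C
      set BadC := {ω | ∀ i, 0 < M.X i ω} ∩ ⋂ n : ℕ, {ω | M.seed n ω ≤ (C : ℝ)} with hBadC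
      have hb : ∀ n : ℕ, P BadC ≤ (expMeasure lam (Iic (C : ℝ))) ^ (n + 1) := by
        intro n
        rw [← prodbound (C : ℝ) n]
        refine measure_mono ?_
        rintro ω ⟨hpos, hbdd⟩
        simp only [Set.mem_iInter] at hbdd
        refine Set.mem_iInter₂.mpr fun i hi => ?_
        have h1 : M.X i ω ≤ M.seed n ω :=
          Finset.single_le_sum (f := fun k => M.X k ω) (fun k _ => (hpos k).le) hi
        exact le_trans h1 (hbdd n)
      have h0 : Tendsto (fun n : ℕ => (expMeasure lam (Iic (C : ℝ))) ^ (n + 1))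
          atTop (nhds 0) :=
        (ENNReal.tendsto_pow_atTop_nhds_zero_of_lt_one (hlt1 C)).comp (tendsto_add_atTop_nat 1)
      have := ge_of_tendsto' h0 hb
      exact le_antisymm this zero_le
    rw [ae_iff]
    refine measure_mono_null ?_ (measure_iUnion_null hCzero)
    intro ω hω
    simp only [mem_setOf_eq, Classical.not_imp] at hω
    obtain ⟨hpos, hnt⟩ := hω
    have hmono : Monotone fun n => M.seed n ω := by
      refine monotone_nat_of_le_succ fun n => ?_
      have hss : M.seed (n + 1) ω = M.seed n ω + M.X (n + 1) ω := by
        rw [StickModel.seed, StickModel.seed, Finset.sum_range_succ]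
      rw [hss]
      have := hpos (n + 1); linarith
    have hbdd : BddAbove (Set.range fun n => M.seed n ω) := by
      by_contra h
      exact hnt (tendsto_atTop_atTop_of_monotone' hmono h)
    obtain ⟨b, hb⟩ := hbdd
    refine Set.mem_iUnion.mpr ⟨⌈b⌉₊, hpos, Set.mem_iInter.mpr fun n => ?_⟩
    exact le_trans (hb ⟨n, rfl⟩) (Nat.le_ceil b)
  -- combine: a.e. equivalence of the two events
  have hiff : ∀ᵐ ω ∂P, (M.Percolates ω ↔ ∃ f : ℕ → ℕ, StrictMono f ∧
      ∀ k : ℕ, M.seed (f (k + 1)) ω < M.seed (f k) ω + M.S (f k) ω) := by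
    filter_upwards [ae_all_iff.mpr hX0, ae_all_iff.mpr hS0, hneq', hTend] with ω h1 h2 h3 h4
    have hxs : StrictMono fun n => M.seed n ω := by
      refine strictMono_nat_of_lt_succ fun n => ?_
      have hss : M.seed (n + 1) ω = M.seed n ω + M.X (n + 1) ω := by
        rw [StickModel.seed, StickModel.seed, Finset.sum_range_succ]
      rw [hss]
      have := h1 (n + 1); linarith
    exact stick_core (fun n => M.seed n ω) (fun n => M.S n ω) hxs h2 (h4 h1) h3
  rw [ae_iff] at hiff
  refine measure_mono_null ?_ hiff
  intro ω hω
  rw [Set.mem_symmDiff] at hω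
  simp only [Set.mem_setOf_eq] at hω ⊢
  rcases hω with ⟨hA, hB⟩ | ⟨hB, hA⟩
  · exact fun h => hB (h.mp hA)
  · exact fun h => hA (h.mpr hB)
end

section
/- In the stick percolation model, suppose the stick length distribution μ has a heavy tail of exponent 1/2: there exist c > 0 and x₀ ≥ 0 such that R(x) = μ((x,∞)) ≥ c x^{−1/2} for all x ≥ x₀. Then the distribution is cluster-stable: for every intensity λ > 0 the system percolates with probability 1, i.e. P(E) = 1. -/
open MeasureTheory ProbabilityTheory
open scoped ENNReal NNReal

/-- Deterministic covering lemma: if the left endpoints are monotone and unbounded,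
the lengths are nonnegative, and from index `N` on there is no gap, then the sticks
cover the half-line `[x N, ∞)`. -/
lemma stick_covering_aux (x l : ℕ → ℝ) (hm : ∀ k n : ℕ, k ≤ n → x k ≤ x n)
    (hl : ∀ n, 0 ≤ l n) (N : ℕ) (hng : ∀ n, N ≤ n → ∃ k ≤ n, x (n + 1) ≤ x k + l k)
    (hub : ∀ M : ℝ, ∃ n, M ≤ x n) :
    Set.Ici (x N) ⊆ ⋃ n, Set.Icc (x n) (x n + l n) := by
  have key : ∀ n : ℕ, ∀ y : ℝ, x N ≤ y → y ≤ x (N + n) →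
      y ∈ ⋃ m, Set.Icc (x m) (x m + l m) := by
    intro n
    induction n with
    | zero =>
      intro y h1 h2
      exact Set.mem_iUnion.2 ⟨N, h1, h2.trans (le_add_of_nonneg_right (hl N))⟩
    | succ n ih =>
      intro y h1 h2
      by_cases hy : y ≤ x (N + n)
      · exact ih y h1 hy
      · push_neg at hy
        obtain ⟨k, hk, hcov⟩ := hng (N + n) (Nat.le_add_right N n)
        exact Set.mem_iUnion.2 ⟨k, (hm k (N + n) hk).trans hy.le, h2.trans hcov⟩
  intro y hy
  obtain ⟨n, hn⟩ := hub y
  exact key n y hy (hn.trans (hm n (N + n) (Nat.le_add_left n N)))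

/-- `(y / k) ^ k ≤ exp y` for `y ≥ 0`. -/
lemma stick_pow_div_le_exp (k : ℕ) (y : ℝ) (hy : 0 ≤ y) : (y / k) ^ k ≤ Real.exp y := by
  rcases Nat.eq_zero_or_pos k with hk | hk
  · simp [hk, Real.one_le_exp hy]
  · have hknn : (0:ℝ) ≤ y / k := by positivity
    have h1 : (y / k) ^ k ≤ (y / k + 1) ^ k := pow_le_pow_left₀ hknn (by linarith) k
    have h2 : (y / k + 1) ^ k ≤ (Real.exp (y / k)) ^ k :=
      pow_le_pow_left₀ (by positivity) (by linarith [Real.add_one_le_exp (y / k)]) k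
    have h3 : (Real.exp (y / k)) ^ k = Real.exp y := by
      rw [← Real.exp_nat_mul]
      congr 1
      field_simp
    linarith

set_option maxHeartbeats 2000000 in
/-- If the stick length distribution has a heavy tail of exponent `1/2`
(`R(x) ≥ c x^{-1/2}` for large `x`), then it is cluster-stable: for every intensity
`λ > 0` the system percolates with probability 1. -/
theorem stick_percolates_of_half_tail (μ : Measure ℝ) [IsProbabilityMeasure μ]
    (hμ : μ (Set.Ioi (0 : ℝ)) = 1) (c : ℝ) (hc : 0 < c) (x₀ : ℝ) (hx₀ : 0 ≤ x₀)
    (htail : ∀ x : ℝ, x₀ ≤ x → c * x ^ (-(1 / 2) : ℝ) ≤ (μ (Set.Ioi x)).toReal) :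
    ∀ (lam : ℝ), 0 < lam →
      ∀ {Ω : Type} [MeasurableSpace Ω] (P : Measure Ω) [IsProbabilityMeasure P]
        (M : StickModel P lam μ), P {ω | M.Percolates ω} = 1 := by
  intro lam hlam Ω mΩ P instP M
  haveI : IsProbabilityMeasure (expMeasure lam) := isProbabilityMeasure_expMeasure hlam
  -- the scale sequence
  set a : ℕ → ℝ := fun n => c ^ 2 * ((n : ℝ) + 1) ^ ((7:ℝ)/4) with ha
  set t : ℕ → ℝ := fun n => a n / ((n : ℝ) + 2) with ht
  have hu1 : ∀ n : ℕ, (1:ℝ) ≤ (n : ℝ) + 1 := by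
    intro n
    have : (0:ℝ) ≤ (n : ℝ) := Nat.cast_nonneg n
    linarith
  have hupos : ∀ n : ℕ, (0:ℝ) < (n : ℝ) + 1 := fun n => lt_of_lt_of_le one_pos (hu1 n)
  have hapos : ∀ n, 0 < a n := by
    intro n; rw [ha]; positivity
  have htpos : ∀ n, 0 < t n := by
    intro n; rw [ht]
    have : (0:ℝ) < (n : ℝ) + 2 := by positivity
    exact div_pos (hapos n) this
  have hage : ∀ n : ℕ, c ^ 2 * ((n : ℝ) + 1) ≤ a n := by
    intro n
    rw [ha]
    have h1 : ((n : ℝ) + 1) ^ (1:ℝ) ≤ ((n : ℝ) + 1) ^ ((7:ℝ)/4) :=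
      Real.rpow_le_rpow_of_exponent_le (hu1 n) (by norm_num)
    rw [Real.rpow_one] at h1
    exact mul_le_mul_of_nonneg_left h1 (by positivity)
  -- transfer of measure
  have hPX : ∀ (i : ℕ) (T : Set ℝ), MeasurableSet T →
      P (M.X i ⁻¹' T) = expMeasure lam T := by
    intro i T hT
    rw [← M.distX i, Measure.map_apply (M.measX i) hT]
  have hPS : ∀ (i : ℕ) (T : Set ℝ), MeasurableSet T → P (M.S i ⁻¹' T) = μ T := by
    intro i T hT
    calc P (M.S i ⁻¹' T) = P.map (M.S i) T := (Measure.map_apply (M.measS i) hT).symm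
      _ = μ T := by rw [M.distS i]
  -- explicit values of the exponential measure
  have hIic : ∀ u : ℝ, 0 ≤ u →
      expMeasure lam (Set.Iic u) = ENNReal.ofReal (1 - Real.exp (-(lam * u))) := by
    intro u hu
    rw [← ofReal_cdf (expMeasure lam) u,
      cdf_expMeasure_eq hlam, if_pos hu]
  have hexp_le_one : ∀ u : ℝ, 0 ≤ u → Real.exp (-(lam * u)) ≤ 1 := by
    intro u hu
    exact Real.exp_le_one_iff.2 (by nlinarith)
  have hIoi : ∀ u : ℝ, 0 ≤ u →
      expMeasure lam (Set.Ioi u) = ENNReal.ofReal (Real.exp (-(lam * u))) := by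
    intro u hu
    rw [show Set.Ioi u = (Set.Iic u)ᶜ from (Set.compl_Iic (a := u)).symm,
      measure_compl measurableSet_Iic (measure_ne_top _ _), measure_univ, hIic u hu,
      ← ENNReal.ofReal_one, ← ENNReal.ofReal_sub _ (by linarith [hexp_le_one u hu])]
    norm_num
  -- finite products from independence
  have hSprod : ∀ (m : ℕ) (T : Set ℝ), MeasurableSet T →
      P (⋂ k ∈ Finset.range m, M.S k ⁻¹' T) = μ T ^ m := by
    intro m T hT
    have h := M.indep.measure_inter_preimage_eq_mul ((Finset.range m).image Sum.inr)
      (sets := Sum.elim (fun _ => (Set.univ : Set ℝ)) fun _ => T) ?_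
    · have e1 : (⋂ i ∈ (Finset.range m).image Sum.inr,
          Sum.elim M.X M.S i ⁻¹' Sum.elim (fun _ => (Set.univ : Set ℝ)) (fun _ => T) i)
          = ⋂ k ∈ Finset.range m, M.S k ⁻¹' T := by
        ext ω
        simp [Finset.mem_image]
      rw [e1] at h
      rw [h, Finset.prod_image (fun x _ y _ hxy => Sum.inr_injective hxy)]
      simp only [Sum.elim_inr]
      rw [Finset.prod_congr rfl fun k _ => hPS k T hT, Finset.prod_const, Finset.card_range]
    · rintro (i | i) _
      · exact MeasurableSet.univ
      · exact hT
  have hXprod : ∀ (m : ℕ) (T : Set ℝ), MeasurableSet T →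
      P (⋂ k ∈ Finset.range m, M.X k ⁻¹' T) = expMeasure lam T ^ m := by
    intro m T hT
    have h := M.indep.measure_inter_preimage_eq_mul ((Finset.range m).image Sum.inl)
      (sets := Sum.elim (fun _ => T) fun _ => (Set.univ : Set ℝ)) ?_
    · have e1 : (⋂ i ∈ (Finset.range m).image Sum.inl,
          Sum.elim M.X M.S i ⁻¹' Sum.elim (fun _ => T) (fun _ => (Set.univ : Set ℝ)) i)
          = ⋂ k ∈ Finset.range m, M.X k ⁻¹' T := by
        ext ω
        simp [Finset.mem_image]
      rw [e1] at h
      rw [h, Finset.prod_image (fun x _ y _ hxy => Sum.inl_injective hxy)]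
      simp only [Sum.elim_inl]
      rw [Finset.prod_congr rfl fun k _ => hPX k T hT, Finset.prod_const, Finset.card_range]
    · rintro (i | i) _
      · exact hT
      · exact MeasurableSet.univ
  -- the bad events
  set B : ℕ → Set Ω := fun n => ⋃ i ∈ Finset.range (n + 2), M.X i ⁻¹' Set.Ioi (t n) with hB
  set C : ℕ → Set Ω := fun n => ⋂ k ∈ Finset.range (n + 1), M.S k ⁻¹' Set.Iio (a n) with hC
  set D : ℕ → Set Ω := fun n => B n ∪ C n with hD
  -- bound on P (B n)
  have hBn : ∀ n, P (B n) ≤ ENNReal.ofReal (((n:ℝ) + 2) * Real.exp (-(lam * t n))) := by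
    intro n
    calc P (B n) ≤ ∑ i ∈ Finset.range (n + 2), P (M.X i ⁻¹' Set.Ioi (t n)) :=
          measure_biUnion_finset_le _ _
      _ = ∑ _i ∈ Finset.range (n + 2), ENNReal.ofReal (Real.exp (-(lam * t n))) :=
          Finset.sum_congr rfl fun i _ => by
            rw [hPX i _ measurableSet_Ioi, hIoi _ (htpos n).le]
      _ = (n + 2 : ℕ) * ENNReal.ofReal (Real.exp (-(lam * t n))) := by
          rw [Finset.sum_const, Finset.card_range, nsmul_eq_mul]
      _ = ENNReal.ofReal (((n:ℝ) + 2) * Real.exp (-(lam * t n))) := by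
          rw [ENNReal.ofReal_mul (by positivity),
            show ((n:ℝ) + 2) = ((n + 2 : ℕ) : ℝ) by push_cast; ring, ENNReal.ofReal_natCast]
  -- bound on P (C n) for n large
  set N₀ : ℕ := ⌈x₀ / c ^ 2⌉₊ with hN₀
  have hxa : ∀ n, N₀ ≤ n → x₀ ≤ a n := by
    intro n hn
    have h1 : x₀ / c ^ 2 ≤ (N₀ : ℝ) := Nat.le_ceil _
    have h2 : (N₀ : ℝ) ≤ (n : ℝ) + 1 := by
      have : (N₀ : ℝ) ≤ (n : ℝ) := Nat.cast_le.2 hn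
      linarith
    have h3 : x₀ ≤ c ^ 2 * ((n : ℝ) + 1) := by
      have := (div_le_iff₀ (by positivity : (0:ℝ) < c ^ 2)).1 (h1.trans h2)
      linarith [this]
    exact h3.trans (hage n)
  have hCn : ∀ n, N₀ ≤ n →
      P (C n) ≤ ENNReal.ofReal (Real.exp (-(((n:ℝ) + 1) ^ ((1:ℝ)/8)))) := by
    intro n hn
    set u : ℝ := (n : ℝ) + 1 with hu
    have hu0 : (0:ℝ) < u := hupos n
    have h1 : (a n : ℝ) ^ (-(1/2) : ℝ) = c⁻¹ * u ^ (-(7/8) : ℝ) := by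
      rw [ha]
      rw [Real.mul_rpow (by positivity) (by positivity)]
      congr 1
      · rw [← Real.rpow_natCast c 2, ← Real.rpow_mul hc.le]
        norm_num [Real.rpow_neg_one]
      · rw [← Real.rpow_mul hu0.le]
        norm_num
    have h2 : u ^ (-(7/8) : ℝ) ≤ (μ (Set.Ioi (a n))).toReal := by
      have h := htail (a n) (hxa n hn)
      rw [h1, ← mul_assoc, mul_inv_cancel₀ hc.ne', one_mul] at h
      exact h
    have hIoile : μ (Set.Ioi (a n)) ≤ 1 := prob_le_one
    have h3 : (μ (Set.Iio (a n))).toReal ≤ 1 - u ^ (-(7/8) : ℝ) := by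
      have hcompl : μ (Set.Iic (a n)) = 1 - μ (Set.Ioi (a n)) := by
        rw [show Set.Iic (a n) = (Set.Ioi (a n))ᶜ from (Set.compl_Ioi (a := a n)).symm,
          measure_compl measurableSet_Ioi (measure_ne_top _ _), measure_univ]
      have hmono : μ (Set.Iio (a n)) ≤ μ (Set.Iic (a n)) :=
        measure_mono Set.Iio_subset_Iic_self
      have h4 : (μ (Set.Iic (a n))).toReal = 1 - (μ (Set.Ioi (a n))).toReal := by
        rw [hcompl, ENNReal.toReal_sub_of_le hIoile (by norm_num)]
        norm_num
      have h5 : (μ (Set.Iio (a n))).toReal ≤ (μ (Set.Iic (a n))).toReal :=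
        ENNReal.toReal_mono (measure_ne_top _ _) hmono
      rw [h4] at h5
      linarith
    have hPC : P (C n) = μ (Set.Iio (a n)) ^ (n + 1) := hSprod (n + 1) _ measurableSet_Iio
    set r : ℝ := (μ (Set.Iio (a n))).toReal with hr
    have hr0 : 0 ≤ r := ENNReal.toReal_nonneg
    have hμr : μ (Set.Iio (a n)) = ENNReal.ofReal r := (ENNReal.ofReal_toReal (measure_ne_top _ _)).symm
    set ε : ℝ := u ^ (-(7/8) : ℝ) with hε
    have hrle : r ≤ Real.exp (-ε) := by
      have := Real.add_one_le_exp (-ε)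
      linarith
    have hpow : r ^ (n + 1) ≤ Real.exp (-ε) ^ (n + 1) := pow_le_pow_left₀ hr0 hrle _
    have hexp : Real.exp (-ε) ^ (n + 1) = Real.exp (-(u ^ ((1:ℝ)/8))) := by
      rw [← Real.exp_nat_mul]
      congr 1
      have hcast : ((n + 1 : ℕ) : ℝ) = u := by rw [hu]; push_cast; ring
      rw [hcast, mul_neg, hε, ← Real.rpow_one_add' hu0.le (by norm_num : (1:ℝ) + -(7/8) ≠ 0)]
      norm_num
    rw [hPC, hμr, ← ENNReal.ofReal_pow hr0]
    exact ENNReal.ofReal_le_ofReal (by rw [← hexp]; exact hpow)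
  -- global summable bound
  set K₁ : ℝ := lam * c ^ 2 / 2 with hK₁
  have hK₁pos : 0 < K₁ := by rw [hK₁]; positivity
  set KB : ℝ := 2 * (6 / K₁) ^ 6 with hKB
  have hKBpos : 0 < KB := by rw [hKB]; positivity
  set KC : ℝ := (24:ℝ) ^ 24 with hKC
  set K : ℝ := KB + KC + ((N₀:ℝ) + 1) ^ 2 with hK
  have hKpos : 0 < K := by rw [hK, hKC]; positivity
  have hDbound : ∀ n, P (D n) ≤ ENNReal.ofReal (K / ((n:ℝ) + 1) ^ 2) := by
    intro n
    set u : ℝ := (n : ℝ) + 1 with hu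
    have hu0 : (0:ℝ) < u := hupos n
    have hu1' : (1:ℝ) ≤ u := hu1 n
    by_cases hn : N₀ ≤ n
    · -- the real bound for B
      have hy : K₁ * u ^ ((3:ℝ)/4) ≤ lam * t n := by
        have htn : (c ^ 2 / 2) * u ^ ((3:ℝ)/4) ≤ t n := by
          rw [ht]
          have hn2 : ((n:ℝ) + 2) ≤ 2 * u := by rw [hu]; linarith
          have h1 : a n / (2 * u) ≤ a n / ((n:ℝ) + 2) :=
            div_le_div_of_nonneg_left (hapos n).le (by positivity) hn2
          refine le_trans ?_ h1
          have ha' : a n = c ^ 2 * u ^ ((7:ℝ)/4) := rfl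
          rw [ha', le_div_iff₀ (by positivity : (0:ℝ) < 2 * u)]
          have h2 : u ^ ((3:ℝ)/4) * u = u ^ ((7:ℝ)/4) := by
            nth_rewrite 2 [← Real.rpow_one u]
            rw [← Real.rpow_add hu0]
            norm_num
          nlinarith [Real.rpow_nonneg hu0.le ((3:ℝ)/4), Real.rpow_nonneg hu0.le ((7:ℝ)/4),
            sq_nonneg c]
        calc K₁ * u ^ ((3:ℝ)/4) = lam * ((c ^ 2 / 2) * u ^ ((3:ℝ)/4)) := by rw [hK₁]; ring
          _ ≤ lam * t n := by
            exact mul_le_mul_of_nonneg_left htn hlam.le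
      have hBreal : ((n:ℝ) + 2) * Real.exp (-(lam * t n)) ≤ KB / u ^ 2 := by
        have he1 : Real.exp (-(lam * t n)) ≤ Real.exp (-(K₁ * u ^ ((3:ℝ)/4))) :=
          Real.exp_le_exp.2 (by linarith)
        have he2 : (K₁ / 6) ^ 6 * u ^ 3 ≤ Real.exp (K₁ * u ^ ((3:ℝ)/4)) := by
          have h3 : ((K₁ * u ^ ((3:ℝ)/4)) / 6) ^ 6 ≤ Real.exp (K₁ * u ^ ((3:ℝ)/4)) :=
            stick_pow_div_le_exp 6 _ (by positivity)
          refine le_trans ?_ h3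
          have h4 : ((K₁ * u ^ ((3:ℝ)/4)) / 6) ^ 6 = (K₁ / 6) ^ 6 * (u ^ ((3:ℝ)/4)) ^ (6:ℕ) := by
            ring
          rw [h4]
          have h5 : (u ^ ((3:ℝ)/4)) ^ (6:ℕ) = u ^ ((9:ℝ)/2) := by
            rw [← Real.rpow_natCast (u ^ ((3:ℝ)/4)) 6, ← Real.rpow_mul hu0.le]
            norm_num
          have h6 : u ^ (3:ℕ) ≤ u ^ ((9:ℝ)/2) := by
            rw [← Real.rpow_natCast u 3]
            exact Real.rpow_le_rpow_of_exponent_le hu1' (by norm_num)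
          rw [h5]
          have : (0:ℝ) ≤ (K₁ / 6) ^ 6 := by positivity
          nlinarith
        have hexppos : (0:ℝ) < (K₁ / 6) ^ 6 * u ^ 3 := by positivity
        have he3 : Real.exp (-(K₁ * u ^ ((3:ℝ)/4))) ≤ ((K₁ / 6) ^ 6 * u ^ 3)⁻¹ := by
          rw [Real.exp_neg]
          exact inv_anti₀ hexppos he2
        have hn2 : ((n:ℝ) + 2) ≤ 2 * u := by rw [hu]; linarith
        have hexp_nonneg : (0:ℝ) ≤ Real.exp (-(lam * t n)) := (Real.exp_pos _).le
        calc ((n:ℝ) + 2) * Real.exp (-(lam * t n))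
            ≤ (2 * u) * ((K₁ / 6) ^ 6 * u ^ 3)⁻¹ := by
              refine mul_le_mul hn2 (he1.trans he3) hexp_nonneg (by positivity)
          _ = KB / u ^ 2 := by
              rw [hKB, eq_div_iff (by positivity : (u:ℝ) ^ 2 ≠ 0)]
              field_simp [hK₁pos.ne', hu0.ne']
              try ring
      have hCreal : Real.exp (-(u ^ ((1:ℝ)/8))) ≤ KC / u ^ 2 := by
        have h3 : ((u ^ ((1:ℝ)/8)) / 24) ^ 24 ≤ Real.exp (u ^ ((1:ℝ)/8)) :=
          stick_pow_div_le_exp 24 _ (by positivity)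
        have h5 : (u ^ ((1:ℝ)/8)) ^ (24:ℕ) = u ^ (3:ℝ) := by
          rw [← Real.rpow_natCast (u ^ ((1:ℝ)/8)) 24, ← Real.rpow_mul hu0.le]
          norm_num
        have h6 : u ^ (2:ℕ) ≤ u ^ (3:ℝ) := by
          rw [← Real.rpow_natCast u 2]
          exact Real.rpow_le_rpow_of_exponent_le hu1' (by norm_num)
        have h7 : u ^ 2 / KC ≤ Real.exp (u ^ ((1:ℝ)/8)) := by
          refine le_trans ?_ h3
          rw [div_pow, hKC]
          rw [show ((u ^ ((1:ℝ)/8)) ^ (24:ℕ) : ℝ) = u ^ (3:ℝ) from h5]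
          gcongr
          all_goals first
            | exact h6
            | positivity
        rw [Real.exp_neg]
        have h8 : (0:ℝ) < u ^ 2 / KC := by
          have : (0:ℝ) < KC := by rw [hKC]; positivity
          positivity
        calc (Real.exp (u ^ ((1:ℝ)/8)))⁻¹ ≤ (u ^ 2 / KC)⁻¹ := inv_anti₀ h8 h7
          _ = KC / u ^ 2 := by
              rw [inv_div]
      have hsum : P (D n) ≤ ENNReal.ofReal (KB / u ^ 2) + ENNReal.ofReal (KC / u ^ 2) := by
        refine (measure_union_le _ _).trans ?_
        gcongr
        · exact (hBn n).trans (ENNReal.ofReal_le_ofReal hBreal)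
        · exact (hCn n hn).trans (ENNReal.ofReal_le_ofReal hCreal)
      refine hsum.trans ?_
      rw [← ENNReal.ofReal_add (by positivity) (by positivity)]
      refine ENNReal.ofReal_le_ofReal ?_
      rw [hK, ← add_div]
      refine (div_le_div_iff_of_pos_right (by positivity : (0:ℝ) < u ^ 2)).2 ?_
      nlinarith [sq_nonneg ((N₀:ℝ) + 1)]
    · -- small n : trivial bound
      push_neg at hn
      have h1 : (1:ℝ) ≤ K / u ^ 2 := by
        rw [le_div_iff₀ (by positivity)]
        have h2 : u ≤ (N₀:ℝ) + 1 := by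
          rw [hu]
          have : (n:ℝ) ≤ (N₀:ℝ) := Nat.cast_le.2 hn.le
          linarith
        have h3 : u ^ 2 ≤ ((N₀:ℝ) + 1) ^ 2 := by nlinarith
        rw [hK]
        nlinarith [hKBpos, show (0:ℝ) < KC by rw [hKC]; positivity]
      calc P (D n) ≤ 1 := prob_le_one
        _ = ENNReal.ofReal 1 := by norm_num
        _ ≤ ENNReal.ofReal (K / u ^ 2) := ENNReal.ofReal_le_ofReal h1
  -- Borel–Cantelli
  have hsummable : Summable (fun n : ℕ => K / ((n:ℝ) + 1) ^ 2) := by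
    have h1 : Summable (fun n : ℕ => 1 / ((n:ℝ) + 1) ^ 2) := by
      have h2 := Real.summable_one_div_nat_pow.2 (show 1 < 2 by norm_num)
      have h3 := (summable_nat_add_iff 1).2 h2
      exact h3.congr fun n => by push_cast; ring
    exact (h1.mul_left K).congr fun n => by field_simp
  have htsum : ∑' n, P (D n) ≠ ⊤ := by
    refine ne_of_lt (lt_of_le_of_lt (ENNReal.tsum_le_tsum hDbound) ?_)
    rw [← ENNReal.ofReal_tsum_of_nonneg (fun n => by positivity) hsummable]
    exact ENNReal.ofReal_lt_top
  have hBC : P (Filter.limsup D Filter.atTop) = 0 := measure_limsup_atTop_eq_zero htsum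
  -- null sets
  have hX0 : P (⋃ i, M.X i ⁻¹' Set.Iio 0) = 0 := by
    refine measure_iUnion_null fun i => ?_
    rw [hPX i _ measurableSet_Iio]
    refine measure_mono_null Set.Iio_subset_Iic_self ?_
    rw [hIic 0 le_rfl]
    simp
  have hS0 : P (⋃ i, M.S i ⁻¹' Set.Iic 0) = 0 := by
    refine measure_iUnion_null fun i => ?_
    rw [hPS i _ measurableSet_Iic,
      show Set.Iic (0:ℝ) = (Set.Ioi (0:ℝ))ᶜ from (Set.compl_Ioi (a := (0:ℝ))).symm,
      measure_compl measurableSet_Ioi (measure_ne_top _ _), measure_univ, hμ, tsub_self]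
  have hUnb : ∀ Mn : ℕ,
      P ({ω | ∀ n, M.seed n ω ≤ (Mn:ℝ)} ∩ {ω | ∀ i, 0 ≤ M.X i ω}) = 0 := by
    intro Mn
    set q : ℝ≥0∞ := expMeasure lam (Set.Iic (Mn:ℝ)) with hq
    have hqlt : q < 1 := by
      rw [hq, hIic _ (Nat.cast_nonneg _)]
      refine ENNReal.ofReal_lt_one.2 ?_
      have := Real.exp_pos (-(lam * (Mn:ℝ)))
      linarith
    have hsub : ∀ m : ℕ, ({ω | ∀ n, M.seed n ω ≤ (Mn:ℝ)} ∩ {ω | ∀ i, 0 ≤ M.X i ω}) ⊆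
        ⋂ i ∈ Finset.range m, M.X i ⁻¹' Set.Iic (Mn:ℝ) := by
      intro m ω hω
      obtain ⟨h1, h2⟩ := hω
      simp only [Set.mem_iInter, Set.mem_preimage, Set.mem_Iic, Finset.mem_range]
      intro i _
      have hle : M.X i ω ≤ M.seed i ω :=
        Finset.single_le_sum (f := fun j => M.X j ω) (fun j _ => h2 j)
          (Finset.self_mem_range_succ i)
      exact hle.trans (h1 i)
    have hle : ∀ m : ℕ,
        P ({ω | ∀ n, M.seed n ω ≤ (Mn:ℝ)} ∩ {ω | ∀ i, 0 ≤ M.X i ω}) ≤ q ^ m := by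
      intro m
      refine (measure_mono (hsub m)).trans ?_
      rw [hXprod m _ measurableSet_Iic]
    exact le_antisymm
      (ge_of_tendsto' (ENNReal.tendsto_pow_atTop_nhds_zero_of_lt_one hqlt) hle)
      (zero_le)
  -- the bad set
  set Bad : Set Ω := (⋃ i, M.X i ⁻¹' Set.Iio 0) ∪ (⋃ i, M.S i ⁻¹' Set.Iic 0) ∪
    Filter.limsup D Filter.atTop ∪
    ⋃ Mn : ℕ, ({ω | ∀ n, M.seed n ω ≤ (Mn:ℝ)} ∩ {ω | ∀ i, 0 ≤ M.X i ω}) with hBad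
  have hBadnull : P Bad = 0 := by
    rw [hBad]
    refine measure_union_null (measure_union_null (measure_union_null hX0 hS0) hBC) ?_
    exact measure_iUnion_null hUnb
  -- on the complement of the bad set we percolate
  have hgood : Badᶜ ⊆ {ω | M.Percolates ω} := by
    intro ω hω
    rw [hBad] at hω
    simp only [Set.mem_compl_iff, Set.mem_union, not_or, Set.mem_iUnion, not_exists,
      Set.mem_inter_iff, Set.mem_preimage, Set.mem_Iio, Set.mem_Iic, not_and,
      Set.mem_setOf_eq] at hω
    obtain ⟨⟨⟨hXnn, hSpos⟩, hDev⟩, hUn⟩ := hω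
    have hXnn' : ∀ i, 0 ≤ M.X i ω := fun i => not_lt.1 (hXnn i)
    have hSpos' : ∀ i, 0 < M.S i ω := fun i => not_le.1 (hSpos i)
    have hev : ∀ᶠ n in Filter.atTop, ω ∉ D n := by
      have := (not_iff_not.2 (Filter.mem_limsup_iff_frequently_mem (a := ω) (s := D)
        (𝓕 := Filter.atTop))).1 hDev
      rwa [Filter.not_frequently] at this
    obtain ⟨N, hN⟩ := Filter.eventually_atTop.1 hev
    have hseed_nonneg : ∀ k, 0 ≤ M.seed k ω := by
      intro k
      exact Finset.sum_nonneg fun i _ => hXnn' i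
    have hmono : ∀ k n : ℕ, k ≤ n → M.seed k ω ≤ M.seed n ω := by
      intro k n hkn
      refine Finset.sum_le_sum_of_subset_of_nonneg ?_ fun i _ _ => hXnn' i
      exact Finset.range_subset_range.2 (by omega)
    refine ⟨M.seed N ω, stick_covering_aux (fun n => M.seed n ω) (fun n => M.S n ω)
      hmono (fun n => (hSpos' n).le) N ?_ ?_⟩
    · -- no gap beyond N
      intro n hn
      have hDn := hN n hn
      rw [hD] at hDn
      simp only [Set.mem_union, not_or] at hDn
      obtain ⟨hBn', hCn'⟩ := hDn
      have hseed_le : M.seed (n + 1) ω ≤ a n := by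
        rw [hB] at hBn'
        simp only [Set.mem_iUnion, Set.mem_preimage, Set.mem_Ioi, not_exists,
          Finset.mem_range] at hBn'
        have hXle : ∀ i ∈ Finset.range (n + 2), M.X i ω ≤ t n := by
          intro i hi
          exact not_lt.1 fun hlt => hBn' i (Finset.mem_range.1 hi) hlt
        calc M.seed (n + 1) ω = ∑ i ∈ Finset.range (n + 2), M.X i ω := rfl
          _ ≤ ∑ _i ∈ Finset.range (n + 2), t n := Finset.sum_le_sum hXle
          _ = (n + 2 : ℕ) * t n := by rw [Finset.sum_const, Finset.card_range, nsmul_eq_mul]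
          _ = a n := by
            rw [ht]
            have : ((n + 2 : ℕ) : ℝ) = (n : ℝ) + 2 := by push_cast; ring
            rw [this]
            field_simp
      rw [hC] at hCn'
      simp only [Set.mem_iInter, Set.mem_preimage, Set.mem_Iio, Finset.mem_range,
        not_forall] at hCn'
      obtain ⟨k, hk, hSk⟩ := hCn'
      refine ⟨k, by omega, ?_⟩
      have hak : a n ≤ M.S k ω := not_lt.1 hSk
      have := hseed_nonneg k
      linarith [hseed_le]
    · -- unboundedness
      intro Mr
      have h := hUn ⌈Mr⌉₊
      have h2 : ¬ ∀ n, M.seed n ω ≤ ((⌈Mr⌉₊:ℕ):ℝ) := fun hall => h hall hXnn'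
      push_neg at h2
      obtain ⟨n, hn⟩ := h2
      exact ⟨n, (Nat.le_ceil Mr).trans hn.le⟩
  -- conclude
  have h1 : (1:ℝ≥0∞) ≤ P {ω | M.Percolates ω} := by
    have h2 : P Set.univ ≤ P Bad + P Badᶜ := by
      rw [← Set.union_compl_self Bad]
      exact measure_union_le _ _
    rw [measure_univ, hBadnull, zero_add] at h2
    exact h2.trans (measure_mono hgood)
  exact le_antisymm prob_le_one h1
end

section
/- In the stick percolation model, suppose the stick length distribution μ has a Cauchy-type tail: for some c > 0, x · R(x) → c as x → ∞, where R(x) = μ((x,∞)). If λ > 1/c, then the system percolates with probability 1, i.e. P(E) = 1. -/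
open MeasureTheory ProbabilityTheory Real Set Filter
open scoped ENNReal NNReal

section Aux

lemma iIndepFun_precomp' {Ω ι ι' : Type*} [MeasurableSpace Ω] {P : Measure Ω}
    {β : Type*} [m : MeasurableSpace β] {f : ι → Ω → β}
    (hf : iIndepFun f P) {g : ι' → ι} (hg : Function.Injective g) :
    iIndepFun (fun i => f (g i)) P := by
  rw [iIndepFun_iff_measure_inter_preimage_eq_mul] at hf ⊢
  intro s sets h_meas
  classical
  have h := hf (s.map ⟨g, hg⟩)
    (sets := Function.extend g sets (fun _ => Set.univ)) ?_
  · rw [Finset.prod_map] at h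
    have e1 : (⋂ i ∈ s.map ⟨g, hg⟩, f i ⁻¹' Function.extend g sets (fun _ => Set.univ) i)
        = ⋂ i ∈ s, f (g i) ⁻¹' sets i := by
      ext ω
      simp only [Set.mem_iInter, Set.mem_preimage, Finset.mem_map,
        Function.Embedding.coeFn_mk, forall_exists_index, and_imp]
      constructor
      · intro h1 j hj
        have := h1 (g j) j hj rfl
        rwa [hg.extend_apply] at this
      · rintro h1 i j hj rfl
        rw [hg.extend_apply]
        exact h1 j hj
    rw [e1] at h
    rw [h]
    apply Finset.prod_congr rfl
    intro j hj
    simp only [Function.Embedding.coeFn_mk, hg.extend_apply]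
  · intro i hi
    rcases Finset.mem_map.1 hi with ⟨j, hj, rfl⟩
    simp only [Function.Embedding.coeFn_mk, hg.extend_apply]
    exact h_meas j hj

lemma expMeasure_Iic_zero (lam : ℝ) : expMeasure lam (Set.Iic 0) = 0 := by
  have h1 : expMeasure lam (Set.Iio 0) = 0 := by
    rw [expMeasure, gammaMeasure, withDensity_apply _ measurableSet_Iio]
    exact lintegral_gammaPDF_of_nonpos le_rfl
  have h2 : expMeasure lam {(0:ℝ)} = 0 := by
    rw [expMeasure, gammaMeasure]
    exact (withDensity_absolutelyContinuous _ _) (measure_singleton 0)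
  have : Set.Iic (0:ℝ) = Set.Iio 0 ∪ {0} := by
    ext x; simp [le_iff_lt_or_eq]
  rw [this]
  exact le_antisymm ((measure_union_le _ _).trans (by rw [h1, h2]; simp)) zero_le

lemma exp_aux_indicator {lam t : ℝ} (hlam : 0 < lam) :
    (fun x => (exponentialPDFReal lam x).toNNReal • rexp (t * x))
      = Set.indicator (Set.Ici 0) (fun x => lam * rexp (-((lam - t) * x))) := by
  funext x
  simp only [NNReal.smul_def, smul_eq_mul, Real.coe_toNNReal _ (exponentialPDFReal_nonneg hlam x)]
  rw [exponentialPDFReal, gammaPDFReal]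
  by_cases hx : 0 ≤ x
  · rw [Set.indicator_of_mem (Set.mem_Ici.2 hx), if_pos hx]
    simp only [rpow_one, Real.Gamma_one, div_one, sub_self, rpow_zero, mul_one]
    rw [mul_assoc, ← Real.exp_add]
    ring_nf
  · rw [Set.indicator_of_notMem (by simpa using hx), if_neg hx, zero_mul]

lemma integrable_exp_mul_expMeasure {lam t : ℝ} (hlam : 0 < lam) (ht : t < lam) :
    Integrable (fun x => rexp (t * x)) (expMeasure lam) := by
  have hb : 0 < lam - t := by linarith
  have f_meas : Measurable (fun x => (exponentialPDFReal lam x).toNNReal) :=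
    (measurable_exponentialPDFReal lam).real_toNNReal
  have : expMeasure lam = volume.withDensity (fun x => ((exponentialPDFReal lam x).toNNReal : ℝ≥0∞)) := by
    rw [expMeasure, gammaMeasure]
    rfl
  rw [this, integrable_withDensity_iff_integrable_smul f_meas]
  rw [exp_aux_indicator hlam]
  rw [integrable_indicator_iff measurableSet_Ici]
  rw [integrableOn_Ici_iff_integrableOn_Ioi]
  have h := (exp_neg_integrableOn_Ioi 0 hb).const_mul lam
  have e : (fun x => lam * rexp (-(lam - t) * x)) = (fun x => lam * rexp (-((lam - t) * x))) := by
    funext x; ring_nf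
  rw [IntegrableOn, ← e]; exact h

lemma integral_exp_mul_expMeasure {lam t : ℝ} (hlam : 0 < lam) (ht : t < lam) :
    ∫ x, rexp (t * x) ∂(expMeasure lam) = lam / (lam - t) := by
  have hb : 0 < lam - t := by linarith
  have f_meas : Measurable (fun x => (exponentialPDFReal lam x).toNNReal) :=
    (measurable_exponentialPDFReal lam).real_toNNReal
  have hP : expMeasure lam = volume.withDensity (fun x => ((exponentialPDFReal lam x).toNNReal : ℝ≥0∞)) := by
    rw [expMeasure, gammaMeasure]; rfl
  rw [hP, integral_withDensity_eq_integral_smul f_meas]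
  have := exp_aux_indicator (t := t) hlam
  rw [show (fun x => (exponentialPDFReal lam x).toNNReal • rexp (t * x))
      = Set.indicator (Set.Ici 0) (fun x => lam * rexp (-((lam - t) * x))) from this]
  rw [integral_indicator measurableSet_Ici, integral_Ici_eq_integral_Ioi]
  have : ∫ x in Ioi (0:ℝ), lam * rexp (-((lam - t) * x))
      = lam * ∫ x in Ioi (0:ℝ), rexp (-((lam - t) * x)) := by
    rw [integral_const_mul]
  rw [this]
  have : ∫ x in Ioi (0:ℝ), rexp (-((lam - t) * x)) = (lam - t)⁻¹ := by
    have h := integral_comp_mul_left_Ioi (fun y => rexp (-y)) 0 hb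
    simp only [mul_zero, integral_exp_neg_Ioi, neg_zero, Real.exp_zero, smul_eq_mul, mul_one] at h
    simpa using h
  rw [this, div_eq_mul_inv]

lemma log_sub_log_le_sum_Icc {m : ℕ} (hm : 1 ≤ m) (M : ℕ) :
    Real.log (M+1) - Real.log m ≤ ∑ k ∈ Finset.Icc m M, (1 / (k:ℝ)) := by
  induction M with
  | zero =>
    rw [Finset.Icc_eq_empty (by omega)]
    simp only [Finset.sum_empty, Nat.cast_zero, zero_add, Real.log_one]
    have : (0:ℝ) ≤ Real.log m := Real.log_nonneg (by exact_mod_cast hm)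
    linarith
  | succ M ih =>
    by_cases h : m ≤ M + 1
    · rw [Finset.sum_Icc_succ_top h]
      have key : Real.log (M+2) - Real.log (M+1) ≤ 1 / ((M+1 : ℕ):ℝ) := by
        have hpos : (0:ℝ) < (M+2)/(M+1) := by positivity
        have h1 : Real.log ((M+2 : ℝ)/(M+1)) ≤ (M+2 : ℝ)/(M+1) - 1 :=
          Real.log_le_sub_one_of_pos hpos
        rw [Real.log_div (by positivity) (by positivity)] at h1
        have h2 : (M+2 : ℝ)/(M+1) - 1 = 1/((M:ℝ)+1) := by
          field_simp
          norm_num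
        rw [h2] at h1
        push_cast
        linarith
      push_cast at key ih ⊢
      rw [show ((M:ℝ)+1+1) = (M:ℝ)+2 from by ring]
      linarith
    · rw [Finset.Icc_eq_empty (by omega)]
      simp only [Finset.sum_empty]
      have : Real.log ((M:ℝ)+1+1) ≤ Real.log m := by
        apply Real.log_le_log (by positivity)
        have : (M+2 : ℕ) ≤ m := by omega
        exact_mod_cast this
      have e2 : ((M:ℝ)+1+1) = (M:ℝ)+2 := by ring
      rw [e2] at this
      push_cast
      rw [e2]
      linarith

lemma summable_aux {r : ℝ} (hr0 : 0 < r) (hr1 : r < 1) (K : ℕ) (A : ℝ) (hA : 1 ≤ A) :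
    Summable (fun l : ℕ => r ^ l * ((l:ℝ) + A) ^ K) := by
  have h1 : Summable (fun n : ℕ => (n:ℝ) ^ K * r ^ n) :=
    summable_pow_mul_geometric_of_norm_lt_one K (by rw [Real.norm_eq_abs, abs_of_pos hr0]; exact hr1)
  have h2 : Summable (fun l : ℕ => ((l+1 : ℕ):ℝ) ^ K * r ^ (l+1)) :=
    h1.comp_injective (add_left_injective 1)
  have h3 : Summable (fun l : ℕ => ((l:ℝ)+1) ^ K * r ^ l) := by
    have := h2.mul_left r⁻¹
    apply this.congr
    intro l
    push_cast
    rw [pow_succ]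
    field_simp
  apply Summable.of_nonneg_of_le (fun l => by positivity)
    (fun l => ?_) (h3.mul_left (A ^ K))
  have hle : (l:ℝ) + A ≤ A * ((l:ℝ)+1) := by nlinarith [Nat.cast_nonneg (α := ℝ) l]
  calc r ^ l * ((l:ℝ) + A) ^ K ≤ r ^ l * (A * ((l:ℝ)+1)) ^ K := by
        apply mul_le_mul_of_nonneg_left _ (by positivity)
        exact pow_le_pow_left₀ (by positivity) hle K
    _ = A ^ K * (((l:ℝ)+1) ^ K * r ^ l) := by rw [mul_pow]; ring

lemma summable_npow_neg {cs : ℝ} (hcs : 1 < cs) :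
    Summable (fun n : ℕ => ((n:ℝ)+2) ^ (-cs)) := by
  have h1 : Summable (fun n : ℕ => ((n:ℝ) ^ cs)⁻¹) := Real.summable_nat_rpow_inv.2 hcs
  have h2 := h1.comp_injective (add_left_injective 2)
  apply h2.congr
  intro n
  simp only [Function.comp_apply]
  push_cast
  rw [Real.rpow_neg (by positivity)]

end Aux
set_option linter.unusedSectionVars false

namespace StickModel
variable {Ω : Type} [MeasurableSpace Ω] {P : Measure Ω} [IsProbabilityMeasure P]
  {lam : ℝ} {μ : Measure ℝ} (M : StickModel P lam μ)

lemma measElim : ∀ i : ℕ ⊕ ℕ, Measurable (Sum.elim M.X M.S i) := by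
  intro i; cases i with
  | inl j => exact M.measX j
  | inr j => exact M.measS j

lemma indepX : iIndepFun M.X P := by
  have := iIndepFun_precomp' M.indep (Sum.inl_injective (β := ℕ))
  simpa using this

lemma indepS : iIndepFun M.S P := by
  have := iIndepFun_precomp' M.indep (Sum.inr_injective (α := ℕ))
  simpa using this

lemma integrable_exp_mul (hlam : 0 < lam) {t : ℝ} (ht : t < lam) (i : ℕ) :
    Integrable (fun ω => rexp (t * M.X i ω)) P := by
  have h : Integrable (fun x => rexp (t * x)) (P.map (M.X i)) := by
    rw [M.distX i]; exact integrable_exp_mul_expMeasure hlam ht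
  exact (integrable_map_measure
    (Continuous.aestronglyMeasurable (by continuity)) (M.measX i).aemeasurable).1 h

lemma mgf_X (hlam : 0 < lam) {t : ℝ} (ht : t < lam) (i : ℕ) :
    mgf (M.X i) P t = lam / (lam - t) := by
  rw [mgf]
  have : ∫ ω, rexp (t * M.X i ω) ∂P = ∫ x, rexp (t * x) ∂(P.map (M.X i)) := by
    rw [integral_map (M.measX i).aemeasurable
      (Continuous.aestronglyMeasurable (by continuity))]
  rw [this, M.distX i, integral_exp_mul_expMeasure hlam ht]

lemma mgf_block_sum (hlam : 0 < lam) {t : ℝ} (ht : t < lam) (s : Finset ℕ) :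
    mgf (∑ j ∈ s, M.X j) P t = (lam / (lam - t)) ^ s.card := by
  rw [M.indepX.mgf_sum M.measX s]
  rw [Finset.prod_congr rfl (fun j _ => M.mgf_X hlam ht j), Finset.prod_const]

lemma chernoff_block (hlam : 0 < lam) {θ : ℝ} (hθ0 : 0 ≤ θ) (hθ : θ < lam)
    (s : Finset ℕ) (a : ℝ) :
    (P {ω | a ≤ ∑ j ∈ s, M.X j ω}).toReal
      ≤ rexp (-θ * a) * (lam / (lam - θ)) ^ s.card := by
  have hint : Integrable (fun ω => rexp (θ * (∑ j ∈ s, M.X j) ω)) P :=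
    M.indepX.integrable_exp_mul_sum M.measX (fun i _ => M.integrable_exp_mul hlam hθ i)
  have h := measure_ge_le_exp_mul_mgf (X := ∑ j ∈ s, M.X j) (μ := P) a hθ0 hint
  rw [M.mgf_block_sum hlam hθ s] at h
  convert h using 3
  simp [Measure.real]

lemma chernoff_seed_low (hlam : 0 < lam) (a : ℝ) (n : ℕ) :
    (P {ω | (∑ i ∈ Finset.range (n+1), M.X i ω) ≤ a}).toReal
      ≤ rexp a * (lam / (lam + 1)) ^ (n + 1) := by
  have hneg : (-1 : ℝ) < lam := by linarith
  have hint : Integrable (fun ω => rexp ((-1) * (∑ j ∈ Finset.range (n+1), M.X j) ω)) P :=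
    M.indepX.integrable_exp_mul_sum M.measX (fun i _ => M.integrable_exp_mul hlam hneg i)
  have h := measure_le_le_exp_mul_mgf (X := ∑ j ∈ Finset.range (n+1), M.X j) (μ := P)
    (t := -1) a (by norm_num) hint
  rw [M.mgf_block_sum hlam hneg] at h
  have e : lam - (-1) = lam + 1 := by ring
  rw [e, Finset.card_range] at h
  convert h using 3
  · simp [Measure.real]
  · ring_nf

lemma ae_X_pos (hlam : 0 < lam) (i : ℕ) : ∀ᵐ ω ∂P, 0 < M.X i ω := by
  have : P {ω | M.X i ω ≤ 0} = 0 := by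
    have : {ω | M.X i ω ≤ 0} = M.X i ⁻¹' (Set.Iic 0) := rfl
    rw [this, ← Measure.map_apply (M.measX i) measurableSet_Iic, M.distX i]
    exact expMeasure_Iic_zero lam
  filter_upwards [measure_eq_zero_iff_ae_notMem.1 this] with ω hω
  simpa using not_le.1 hω

lemma measure_S_Iio (i : ℕ) (u : ℝ) : P (M.S i ⁻¹' Set.Iio u) = μ (Set.Iio u) := by
  rw [← Measure.map_apply (M.measS i) measurableSet_Iio, M.distS i]

lemma indep_block_inter (s t : Finset ℕ) (a : ℝ) (u : ℕ → ℝ) :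
    P ({ω | a < ∑ j ∈ s, M.X j ω} ∩ ⋂ i ∈ t, M.S i ⁻¹' Set.Iio (u i))
      = P {ω | a < ∑ j ∈ s, M.X j ω} * P (⋂ i ∈ t, M.S i ⁻¹' Set.Iio (u i)) := by
  classical
  set eL : ℕ ↪ ℕ ⊕ ℕ := ⟨Sum.inl, Sum.inl_injective⟩
  set eR : ℕ ↪ ℕ ⊕ ℕ := ⟨Sum.inr, Sum.inr_injective⟩
  have hdisj : Disjoint (s.map eL) (t.map eR) := by
    rw [Finset.disjoint_iff_ne]
    rintro i hi j hj
    rcases Finset.mem_map.1 hi with ⟨i', _, rfl⟩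
    rcases Finset.mem_map.1 hj with ⟨j', _, rfl⟩
    simp [eL, eR]
  have hind := M.indep.indepFun_finset (s.map eL) (t.map eR) hdisj M.measElim
  set f := fun a (i : (s.map eL : Finset (ℕ⊕ℕ))) => Sum.elim M.X M.S i a with hf
  set g := fun a (i : (t.map eR : Finset (ℕ⊕ℕ))) => Sum.elim M.X M.S i a with hg
  have hA : MeasurableSet {v : (i : (s.map eL : Finset (ℕ⊕ℕ))) → ℝ | a < ∑ i, v i} := by
    have : Measurable (fun v : (i : (s.map eL : Finset (ℕ⊕ℕ))) → ℝ => ∑ i, v i) :=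
      Finset.measurable_sum Finset.univ (fun i _ => measurable_pi_apply i)
    exact measurableSet_lt measurable_const this
  have hB : MeasurableSet {v : (i : (t.map eR : Finset (ℕ⊕ℕ))) → ℝ |
      ∀ i, v i ∈ Set.Iio (Sum.elim (fun _ => (0:ℝ)) u i.1)} := by
    have : {v : (i : (t.map eR : Finset (ℕ⊕ℕ))) → ℝ |
        ∀ i, v i ∈ Set.Iio (Sum.elim (fun _ => (0:ℝ)) u i.1)}
        = Set.pi Set.univ (fun i => Set.Iio (Sum.elim (fun _ => (0:ℝ)) u i.1)) := by
      ext v; simp [Set.mem_pi]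
    rw [this]
    exact MeasurableSet.univ_pi (fun i => measurableSet_Iio)
  have hfpre : f ⁻¹' {v | a < ∑ i, v i} = {ω | a < ∑ j ∈ s, M.X j ω} := by
    ext ω
    simp only [Set.mem_preimage, Set.mem_setOf_eq, hf]
    rw [Finset.sum_coe_sort (s.map eL) (fun i => Sum.elim M.X M.S i ω), Finset.sum_map]
    simp [eL]
  have hgpre : g ⁻¹' {v | ∀ i, v i ∈ Set.Iio (Sum.elim (fun _ => (0:ℝ)) u i.1)}
      = ⋂ i ∈ t, M.S i ⁻¹' Set.Iio (u i) := by
    ext ω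
    simp only [Set.mem_preimage, Set.mem_setOf_eq, hg, Set.mem_iInter, Set.mem_Iio]
    constructor
    · intro h i hi
      have := h ⟨eR i, Finset.mem_map_of_mem eR hi⟩
      simpa [eR] using this
    · rintro h ⟨i, hi⟩
      rcases Finset.mem_map.1 hi with ⟨j, hj, rfl⟩
      simpa [eR] using h j hj
  have := hind.measure_inter_preimage_eq_mul _ _ hA hB
  rw [hfpre, hgpre] at this
  exact this

lemma measure_biInter_S (t : Finset ℕ) (u : ℕ → ℝ) :
    P (⋂ i ∈ t, M.S i ⁻¹' Set.Iio (u i)) = ∏ i ∈ t, P (M.S i ⁻¹' Set.Iio (u i)) := by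
  refine M.indepS.meas_biInter (fun i hi => ?_)
  exact ⟨Set.Iio (u i), measurableSet_Iio, rfl⟩

/-- The gap event: every stick with index `≤ n` ends strictly before seed `n+1`. -/
def gapEvent (n : ℕ) : Set Ω :=
  {ω | ∀ i ≤ n, M.seed i ω + M.S i ω < M.seed (n+1) ω}

def Bset (b : ℝ) (n l : ℕ) : Set Ω :=
  if l = 0 then Set.univ
  else {ω | b * l < ∑ j ∈ Finset.Ico (n+2-l) (n+2), M.X j ω}

def Dset (b : ℝ) (n l : ℕ) : Set Ω :=
  ⋂ i ∈ Finset.range (n+1-l), M.S i ⁻¹' Set.Iio (b * ((n+1-i : ℕ) : ℝ))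

lemma seed_sub {n i : ℕ} (h : i ≤ n) (ω : Ω) :
    M.seed (n+1) ω - M.seed i ω = ∑ j ∈ Finset.Ico (i+1) (n+2), M.X j ω := by
  have := Finset.sum_Ico_consecutive (fun j => M.X j ω)
    (Nat.zero_le (i+1)) (by omega : i + 1 ≤ n + 2)
  simp only [seed, Finset.range_eq_Ico]
  linarith [this]

lemma gap_subset_union (b : ℝ) (n : ℕ) :
    M.gapEvent n ⊆ ⋃ l ∈ Finset.range (n+2), (M.Bset b n l ∩ M.Dset b n l) := by
  classical
  intro ω hω
  have hV : ∀ i ≤ n, M.S i ω < ∑ j ∈ Finset.Ico (i+1) (n+2), M.X j ω := by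
    intro i hi
    have h1 := hω i hi
    have h2 := M.seed_sub hi ω
    linarith
  set Tset := (Finset.Icc 1 (n+1)).filter
    (fun k => b * k < ∑ j ∈ Finset.Ico (n+2-k) (n+2), M.X j ω) with hTset
  by_cases hT : Tset = ∅
  · refine Set.mem_biUnion (Finset.mem_range.2 (by omega : 0 < n+2)) ?_
    constructor
    · simp [Bset]
    · simp only [Dset, Set.mem_iInter, Set.mem_preimage, Set.mem_Iio]
      intro i hi
      rw [Finset.mem_range] at hi
      set k := n + 1 - i with hk
      have hik : i + 1 = n + 2 - k := by omega
      have hknot : k ∉ Tset := by rw [hT]; exact Finset.notMem_empty _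
      rw [hTset, Finset.mem_filter, Finset.mem_Icc] at hknot
      push_neg at hknot
      have hWk : ∑ j ∈ Finset.Ico (n+2-k) (n+2), M.X j ω ≤ b * k :=
        hknot ⟨by omega, by omega⟩
      have := hV i (by omega)
      rw [hik] at this
      calc M.S i ω < ∑ j ∈ Finset.Ico (n+2-k) (n+2), M.X j ω := this
        _ ≤ b * k := hWk
  · have hne : Tset.Nonempty := Finset.nonempty_of_ne_empty hT
    set l := Tset.max' hne with hl
    have hlmem : l ∈ Tset := Tset.max'_mem hne
    rw [hTset, Finset.mem_filter, Finset.mem_Icc] at hlmem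
    refine Set.mem_biUnion (Finset.mem_range.2 (by omega : l < n+2)) ?_
    constructor
    · simp only [Bset, if_neg (by omega : ¬ l = 0)]
      exact hlmem.2
    · simp only [Dset, Set.mem_iInter, Set.mem_preimage, Set.mem_Iio]
      intro i hi
      rw [Finset.mem_range] at hi
      set k := n + 1 - i with hk
      have hik : i + 1 = n + 2 - k := by omega
      have hknot : k ∉ Tset := by
        intro hmem
        have := Tset.le_max' k hmem
        omega
      rw [hTset, Finset.mem_filter, Finset.mem_Icc] at hknot
      push_neg at hknot
      have hWk : ∑ j ∈ Finset.Ico (n+2-k) (n+2), M.X j ω ≤ b * k :=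
        hknot ⟨by omega, by omega⟩
      have := hV i (by omega)
      rw [hik] at this
      calc M.S i ω < ∑ j ∈ Finset.Ico (n+2-k) (n+2), M.X j ω := this
        _ ≤ b * k := hWk

end StickModel
section Quant
variable {Ω : Type} [MeasurableSpace Ω] {P : Measure Ω} [IsProbabilityMeasure P]
  {lam : ℝ} {μ : Measure ℝ} [IsProbabilityMeasure μ] (M : StickModel P lam μ)

namespace StickModel

lemma toReal_Bset_le (hlam : 0 < lam) {δ : ℝ} (hδ : 0 < δ) {n l : ℕ} (hl : l ≤ n+1) :
    (P (M.Bset ((1+δ)/lam) n l)).toReal ≤ ((1+δ) * rexp (-δ)) ^ l := by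
  set b := (1+δ)/lam with hbdef
  rcases Nat.eq_zero_or_pos l with rfl | hlpos
  · simp [Bset]
  · have hθ0 : (0:ℝ) ≤ lam * δ / (1+δ) := by positivity
    have hθlt : lam * δ / (1+δ) < lam := by
      rw [div_lt_iff₀ (by linarith)]
      nlinarith
    set θ := lam * δ / (1+δ) with hθdef
    have hsub : M.Bset b n l ⊆ {ω | b * l ≤ ∑ j ∈ Finset.Ico (n+2-l) (n+2), M.X j ω} := by
      rw [Bset, if_neg (by omega)]
      intro ω hω
      simp only [Set.mem_setOf_eq] at hω ⊢
      exact le_of_lt hω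
    have hmono : (P (M.Bset b n l)).toReal
        ≤ (P {ω | b * l ≤ ∑ j ∈ Finset.Ico (n+2-l) (n+2), M.X j ω}).toReal :=
      ENNReal.toReal_mono (measure_ne_top _ _) (measure_mono hsub)
    have hcard : (Finset.Ico (n+2-l) (n+2)).card = l := by
      rw [Nat.card_Ico]; omega
    have hch := M.chernoff_block hlam hθ0 hθlt (Finset.Ico (n+2-l) (n+2)) (b * l)
    rw [hcard] at hch
    have key : rexp (-θ * (b * l)) * (lam / (lam - θ)) ^ l = ((1+δ) * rexp (-δ)) ^ l := by
      have h1 : lam - θ = lam / (1+δ) := by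
        rw [hθdef]; field_simp; ring
      have h2 : lam / (lam - θ) = 1 + δ := by
        rw [h1]
        field_simp
      have h3 : -θ * (b * l) = (l : ℝ) * (-δ) := by
        rw [hθdef, hbdef]
        field_simp
      rw [h2, h3, Real.exp_nat_mul, mul_pow]
      ring
    rw [key] at hch
    exact hmono.trans hch

lemma toReal_Dset_eq (b : ℝ) (n l : ℕ) :
    (P (M.Dset b n l)).toReal
      = ∏ k ∈ Finset.Icc (l+1) (n+1), (μ (Set.Iio (b * (k:ℝ)))).toReal := by
  rw [Dset, M.measure_biInter_S (Finset.range (n+1-l)) (fun i => b * ((n+1-i : ℕ):ℝ))]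
  rw [ENNReal.toReal_prod]
  rw [Finset.prod_congr rfl (fun i _ => by rw [M.measure_S_Iio])]
  refine Finset.prod_nbij' (fun i => n+1-i) (fun k => n+1-k) ?_ ?_ ?_ ?_ ?_
  · intro i hi
    rw [Finset.mem_range] at hi
    rw [Finset.mem_Icc]
    omega
  · intro k hk
    rw [Finset.mem_Icc] at hk
    rw [Finset.mem_range]
    omega
  · intro i hi
    rw [Finset.mem_range] at hi
    omega
  · intro k hk
    rw [Finset.mem_Icc] at hk
    omega
  · intro i hi
    rfl

lemma prob_Iio_le_one (u : ℝ) : (μ (Set.Iio u)).toReal ≤ 1 := by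
  have h : μ (Set.Iio u) ≤ 1 := (measure_mono (Set.subset_univ _)).trans (by simp)
  calc (μ (Set.Iio u)).toReal ≤ (1 : ℝ≥0∞).toReal :=
        ENNReal.toReal_mono (by simp) h
    _ = 1 := by simp

lemma prod_F_le {b cs : ℝ} (hcs0 : 0 < cs) {k0 : ℕ} (hk0 : 1 ≤ k0)
    (hF : ∀ k : ℕ, k0 ≤ k → (μ (Set.Iio (b * (k:ℝ)))).toReal ≤ rexp (-(cs/k)))
    (l n : ℕ) :
    ∏ k ∈ Finset.Icc (l+1) (n+1), (μ (Set.Iio (b*(k:ℝ)))).toReal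
      ≤ ((max (l+1) k0 : ℕ):ℝ) ^ cs * ((n:ℝ)+2) ^ (-cs) := by
  classical
  set m := max (l+1) k0 with hm
  have hm1 : 1 ≤ m := le_trans hk0 (le_max_right _ _)
  have hsub : Finset.Icc m (n+1) ⊆ Finset.Icc (l+1) (n+1) := by
    apply Finset.Icc_subset_Icc _ le_rfl
    exact le_max_left _ _
  have h1 : ∏ k ∈ Finset.Icc (l+1) (n+1), (μ (Set.Iio (b*(k:ℝ)))).toReal
      ≤ ∏ k ∈ Finset.Icc m (n+1), (μ (Set.Iio (b*(k:ℝ)))).toReal := by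
    rw [← Finset.prod_sdiff hsub]
    have hd1 : ∏ k ∈ Finset.Icc (l+1) (n+1) \ Finset.Icc m (n+1),
        (μ (Set.Iio (b*(k:ℝ)))).toReal ≤ 1 :=
      Finset.prod_le_one (fun k _ => ENNReal.toReal_nonneg) (fun k _ => prob_Iio_le_one _)
    have hd2 : (0:ℝ) ≤ ∏ k ∈ Finset.Icc m (n+1), (μ (Set.Iio (b*(k:ℝ)))).toReal :=
      Finset.prod_nonneg (fun k _ => ENNReal.toReal_nonneg)
    nlinarith
  have h2 : ∏ k ∈ Finset.Icc m (n+1), (μ (Set.Iio (b*(k:ℝ)))).toReal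
      ≤ ∏ k ∈ Finset.Icc m (n+1), rexp (-(cs/(k:ℝ))) := by
    apply Finset.prod_le_prod (fun k _ => ENNReal.toReal_nonneg)
    intro k hk
    rw [Finset.mem_Icc] at hk
    exact hF k (le_trans (le_max_right _ _) hk.1)
  have h3 : ∏ k ∈ Finset.Icc m (n+1), rexp (-(cs/(k:ℝ)))
      = rexp (∑ k ∈ Finset.Icc m (n+1), -(cs/(k:ℝ))) := (Real.exp_sum _ _).symm
  have h4 : ∑ k ∈ Finset.Icc m (n+1), -(cs/(k:ℝ))
      ≤ -(cs * (Real.log ((n:ℝ)+2) - Real.log m)) := by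
    have hsum := log_sub_log_le_sum_Icc hm1 (n+1)
    have e : ∑ k ∈ Finset.Icc m (n+1), -(cs/(k:ℝ))
        = -(cs * ∑ k ∈ Finset.Icc m (n+1), (1/(k:ℝ))) := by
      rw [Finset.mul_sum, ← Finset.sum_neg_distrib]
      apply Finset.sum_congr rfl
      intro k _
      field_simp
    rw [e]
    have e2 : ((n:ℝ)+1+1) = (n:ℝ)+2 := by ring
    push_cast at hsum
    rw [e2] at hsum
    nlinarith
  have h5 : rexp (-(cs * (Real.log ((n:ℝ)+2) - Real.log m)))
      = ((m:ℕ):ℝ) ^ cs * ((n:ℝ)+2) ^ (-cs) := by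
    rw [Real.rpow_def_of_pos (by positivity : (0:ℝ) < ((m:ℕ):ℝ)),
        Real.rpow_def_of_pos (by positivity : (0:ℝ) < (n:ℝ)+2), ← Real.exp_add]
    congr 1
    ring
  calc ∏ k ∈ Finset.Icc (l+1) (n+1), (μ (Set.Iio (b*(k:ℝ)))).toReal
      ≤ ∏ k ∈ Finset.Icc m (n+1), (μ (Set.Iio (b*(k:ℝ)))).toReal := h1
    _ ≤ rexp (∑ k ∈ Finset.Icc m (n+1), -(cs/(k:ℝ))) := by rw [← h3]; exact h2
    _ ≤ rexp (-(cs * (Real.log ((n:ℝ)+2) - Real.log m))) := Real.exp_le_exp.2 h4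
    _ = ((m:ℕ):ℝ) ^ cs * ((n:ℝ)+2) ^ (-cs) := h5

end StickModel
end Quant
section GapBound
variable {Ω : Type} [MeasurableSpace Ω] {P : Measure Ω} [IsProbabilityMeasure P]
  {lam : ℝ} {μ : Measure ℝ} [IsProbabilityMeasure μ] (M : StickModel P lam μ)

namespace StickModel

lemma gap_bound (hlam : 0 < lam) {δ cs : ℝ} (hδ : 0 < δ) (hcs0 : 0 < cs) {k0 : ℕ} (hk0 : 1 ≤ k0)
    (hF : ∀ k : ℕ, k0 ≤ k → (μ (Set.Iio ((1+δ)/lam * (k:ℝ)))).toReal ≤ rexp (-(cs/k)))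
    (n : ℕ) :
    (P (M.gapEvent n)).toReal ≤
      (∑' l : ℕ, ((1+δ)*rexp (-δ))^l * ((l:ℝ) + ((k0:ℝ)+1)) ^ (⌈cs⌉₊))
        * (((n:ℝ)+2) ^ (-cs)) := by
  classical
  set b := (1+δ)/lam with hbdef
  set r := (1+δ)*rexp (-δ) with hrdef
  set K := ⌈cs⌉₊ with hKdef
  have hr0 : 0 < r := by positivity
  have hr1 : r < 1 := by
    have h := Real.add_one_lt_exp (ne_of_gt hδ)
    rw [hrdef, Real.exp_neg]
    rw [mul_inv_lt_iff₀ (Real.exp_pos δ), one_mul]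
    linarith
  have hsummable : Summable (fun l : ℕ => r ^ l * ((l:ℝ) + ((k0:ℝ)+1)) ^ K) :=
    summable_aux hr0 hr1 K ((k0:ℝ)+1) (by nlinarith [(Nat.one_le_cast (α := ℝ)).2 hk0])
  have h0 : P (M.gapEvent n) ≤ ∑ l ∈ Finset.range (n+2), P (M.Bset b n l ∩ M.Dset b n l) :=
    (measure_mono (M.gap_subset_union b n)).trans (measure_biUnion_finset_le _ _)
  have hne : ∀ l ∈ Finset.range (n+2), P (M.Bset b n l ∩ M.Dset b n l) ≠ ⊤ :=
    fun l _ => measure_ne_top _ _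
  have h1 : (P (M.gapEvent n)).toReal
      ≤ ∑ l ∈ Finset.range (n+2), (P (M.Bset b n l ∩ M.Dset b n l)).toReal := by
    have := ENNReal.toReal_mono
      (ENNReal.sum_lt_top.2 (fun l hl => (hne l hl).lt_top)).ne h0
    rwa [ENNReal.toReal_sum hne] at this
  have h2 : ∀ l ∈ Finset.range (n+2), (P (M.Bset b n l ∩ M.Dset b n l)).toReal
      ≤ (r ^ l * ((l:ℝ) + ((k0:ℝ)+1)) ^ K) * (((n:ℝ)+2) ^ (-cs)) := by
    intro l hl
    rw [Finset.mem_range] at hl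
    have hprod : P (M.Bset b n l ∩ M.Dset b n l) = P (M.Bset b n l) * P (M.Dset b n l) := by
      rcases Nat.eq_zero_or_pos l with rfl | hlpos
      · rw [show M.Bset b n 0 = Set.univ from if_pos rfl, Set.univ_inter, measure_univ, one_mul]
      · rw [show M.Bset b n l
            = {ω | b * l < ∑ j ∈ Finset.Ico (n+2-l) (n+2), M.X j ω} from if_neg (by omega)]
        exact M.indep_block_inter _ _ _ _
    rw [hprod, ENNReal.toReal_mul]
    have hB : (P (M.Bset b n l)).toReal ≤ r ^ l := M.toReal_Bset_le hlam hδ (by omega)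
    have hD : (P (M.Dset b n l)).toReal
        ≤ ((max (l+1) k0 : ℕ):ℝ) ^ cs * ((n:ℝ)+2) ^ (-cs) := by
      rw [M.toReal_Dset_eq]
      exact prod_F_le hcs0 hk0 hF l n
    have hDb : ((max (l+1) k0 : ℕ):ℝ) ^ cs ≤ ((l:ℝ) + ((k0:ℝ)+1)) ^ K := by
      have h1m : (1:ℝ) ≤ ((max (l+1) k0 : ℕ):ℝ) := by
        have : 1 ≤ max (l+1) k0 := le_trans hk0 (le_max_right _ _)
        exact_mod_cast this
      calc ((max (l+1) k0 : ℕ):ℝ) ^ cs ≤ ((max (l+1) k0 : ℕ):ℝ) ^ (K:ℝ) :=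
            Real.rpow_le_rpow_of_exponent_le h1m (Nat.le_ceil cs)
        _ = ((max (l+1) k0 : ℕ):ℝ) ^ K := Real.rpow_natCast _ K
        _ ≤ ((l:ℝ) + ((k0:ℝ)+1)) ^ K := by
            apply pow_le_pow_left₀ (by linarith)
            have : max (l+1) k0 ≤ l + k0 + 1 := by omega
            push_cast
            have := (Nat.cast_le (α := ℝ)).2 this
            push_cast at this
            linarith
    calc (P (M.Bset b n l)).toReal * (P (M.Dset b n l)).toReal
        ≤ r ^ l * (((max (l+1) k0 : ℕ):ℝ) ^ cs * ((n:ℝ)+2) ^ (-cs)) := by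
          apply mul_le_mul hB hD ENNReal.toReal_nonneg (by positivity)
      _ ≤ (r ^ l * ((l:ℝ) + ((k0:ℝ)+1)) ^ K) * (((n:ℝ)+2) ^ (-cs)) := by
          rw [← mul_assoc]
          apply mul_le_mul_of_nonneg_right _ (by positivity)
          exact mul_le_mul_of_nonneg_left hDb (by positivity)
  calc (P (M.gapEvent n)).toReal
      ≤ ∑ l ∈ Finset.range (n+2), (P (M.Bset b n l ∩ M.Dset b n l)).toReal := h1
    _ ≤ ∑ l ∈ Finset.range (n+2), (r ^ l * ((l:ℝ) + ((k0:ℝ)+1)) ^ K) * (((n:ℝ)+2) ^ (-cs)) :=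
        Finset.sum_le_sum h2
    _ = (∑ l ∈ Finset.range (n+2), r ^ l * ((l:ℝ) + ((k0:ℝ)+1)) ^ K) * (((n:ℝ)+2) ^ (-cs)) := by
        rw [Finset.sum_mul]
    _ ≤ (∑' l : ℕ, r ^ l * ((l:ℝ) + ((k0:ℝ)+1)) ^ K) * (((n:ℝ)+2) ^ (-cs)) := by
        apply mul_le_mul_of_nonneg_right _ (by positivity)
        exact Summable.sum_le_tsum _ (fun l _ => by positivity) hsummable

end StickModel
end GapBound
section BCseed
variable {Ω : Type} [MeasurableSpace Ω] {P : Measure Ω} [IsProbabilityMeasure P]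
  {lam : ℝ} {μ : Measure ℝ} [IsProbabilityMeasure μ] (M : StickModel P lam μ)

namespace StickModel

lemma ae_eventually_no_gap (hlam : 0 < lam) {δ cs : ℝ} (hδ : 0 < δ) (hcs1 : 1 < cs)
    {k0 : ℕ} (hk0 : 1 ≤ k0)
    (hF : ∀ k : ℕ, k0 ≤ k → (μ (Set.Iio ((1+δ)/lam * (k:ℝ)))).toReal ≤ rexp (-(cs/k))) :
    ∀ᵐ ω ∂P, ∀ᶠ n in atTop, ω ∉ M.gapEvent n := by
  have hcs0 : 0 < cs := by linarith
  set C := ∑' l : ℕ, ((1+δ)*rexp (-δ))^l * ((l:ℝ) + ((k0:ℝ)+1)) ^ (⌈cs⌉₊) with hC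
  have hC0 : 0 ≤ C := tsum_nonneg (fun l => by positivity)
  have hsummable : Summable (fun n : ℕ => C * ((n:ℝ)+2) ^ (-cs)) :=
    (summable_npow_neg hcs1).mul_left C
  have hsum : ∑' n, P (M.gapEvent n) ≠ ⊤ := by
    have hle : ∀ n : ℕ, P (M.gapEvent n) ≤ ENNReal.ofReal (C * ((n:ℝ)+2) ^ (-cs)) := by
      intro n
      rw [← ENNReal.ofReal_toReal (measure_ne_top P (M.gapEvent n))]
      exact ENNReal.ofReal_le_ofReal (M.gap_bound hlam hδ hcs0 hk0 hF n)
    have hlt : ∑' n, P (M.gapEvent n) ≤ ∑' n : ℕ, ENNReal.ofReal (C * ((n:ℝ)+2) ^ (-cs)) :=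
      ENNReal.tsum_le_tsum hle
    rw [(ENNReal.ofReal_tsum_of_nonneg (fun n => by positivity) hsummable).symm] at hlt
    exact ne_top_of_le_ne_top ENNReal.ofReal_ne_top hlt
  filter_upwards [ae_finite_setOf_mem hsum] with ω hfin
  rcases hfin.bddAbove with ⟨N, hN⟩
  rw [eventually_atTop]
  exact ⟨N+1, fun n hn hmem => by have := hN hmem; omega⟩

lemma ae_seed_tendsto (hlam : 0 < lam) :
    ∀ᵐ ω ∂P, Filter.Tendsto (fun n => M.seed n ω) atTop atTop := by
  have hratio0 : 0 ≤ lam / (lam + 1) := by positivity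
  have hratio1 : lam / (lam + 1) < 1 := by
    rw [div_lt_one (by linarith)]; linarith
  have hub : ∀ Mr : ℕ, ∀ᵐ ω ∂P, ∃ n, (Mr:ℝ) < M.seed n ω := by
    intro Mr
    rw [ae_iff]
    push_neg
    have hsub : {ω | ∀ n, M.seed n ω ≤ (Mr:ℝ)}
        ⊆ ⋂ n, {ω | M.seed n ω ≤ (Mr:ℝ)} := by
      intro ω hω
      exact Set.mem_iInter.2 (fun n => hω n)
    have hA : ∀ n : ℕ, (P (⋂ m, {ω | M.seed m ω ≤ (Mr:ℝ)})).toReal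
        ≤ rexp Mr * (lam / (lam + 1)) ^ (n + 1) := by
      intro n
      refine le_trans (ENNReal.toReal_mono (measure_ne_top _ _)
        (measure_mono (Set.iInter_subset _ n))) ?_
      exact M.chernoff_seed_low hlam (Mr:ℝ) n
    have htend : Filter.Tendsto (fun n : ℕ => rexp Mr * (lam / (lam + 1)) ^ (n + 1))
        atTop (nhds 0) := by
      rw [show (0:ℝ) = rexp Mr * 0 from by ring]
      exact (((tendsto_pow_atTop_nhds_zero_of_lt_one hratio0 hratio1).comp
        (tendsto_add_atTop_nat 1))).const_mul _
    have h0 : (P (⋂ m, {ω | M.seed m ω ≤ (Mr:ℝ)})).toReal ≤ 0 :=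
      ge_of_tendsto htend (Filter.Eventually.of_forall hA)
    have h0' : P (⋂ m, {ω | M.seed m ω ≤ (Mr:ℝ)}) = 0 := by
      have := le_antisymm h0 ENNReal.toReal_nonneg
      rwa [ENNReal.toReal_eq_zero_iff, or_iff_left (measure_ne_top _ _)] at this
    exact measure_mono_null hsub h0'
  have hXpos : ∀ᵐ ω ∂P, ∀ i, 0 < M.X i ω := (ae_all_iff).2 (fun i => M.ae_X_pos hlam i)
  have hall : ∀ᵐ ω ∂P, ∀ Mr : ℕ, ∃ n, (Mr:ℝ) < M.seed n ω := (ae_all_iff).2 hub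
  filter_upwards [hXpos, hall] with ω hpos hunb
  have hmono : Monotone (fun n => M.seed n ω) := by
    apply monotone_nat_of_le_succ
    intro n
    have : M.seed (n+1) ω = M.seed n ω + M.X (n+1) ω := by
      simp only [seed, Finset.sum_range_succ]
    rw [this]
    linarith [hpos (n+1)]
  rw [tendsto_atTop_atTop]
  intro a
  rcases exists_nat_ge a with ⟨Mr, hMr⟩
  rcases hunb Mr with ⟨n0, hn0⟩
  exact ⟨n0, fun n hn => le_trans (le_trans hMr hn0.le) (hmono hn)⟩

end StickModel
end BCseed
section Final
variable {Ω : Type} [MeasurableSpace Ω] {P : Measure Ω} [IsProbabilityMeasure P]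
  {lam : ℝ} {μ : Measure ℝ} [IsProbabilityMeasure μ] (M : StickModel P lam μ)

namespace StickModel

lemma percolates_of_aux (ω : Ω) (hX : ∀ i, 0 < M.X i ω)
    (htend : Filter.Tendsto (fun n => M.seed n ω) atTop atTop)
    (N : ℕ) (hgap : ∀ n, N ≤ n → ω ∉ M.gapEvent n) :
    M.Percolates ω := by
  classical
  have hmono : Monotone (fun n => M.seed n ω) := by
    apply monotone_nat_of_le_succ
    intro n
    have : M.seed (n+1) ω = M.seed n ω + M.X (n+1) ω := by
      simp only [seed, Finset.sum_range_succ]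
    rw [this]
    linarith [hX (n+1)]
  refine ⟨M.seed N ω, ?_⟩
  intro t ht
  rw [Set.mem_Ici] at ht
  have hev : ∀ᶠ m in atTop, t < M.seed m ω := htend.eventually_gt_atTop t
  rcases (eventually_atTop).1 hev with ⟨K, hK⟩
  have hNK : N ≤ K := by
    by_contra h
    push_neg at h
    have := hK N (le_of_lt h)
    linarith
  set p := fun m => M.seed m ω ≤ t with hp
  set n := Nat.findGreatest p K with hn
  have hpn : p n := Nat.findGreatest_spec hNK ht
  have hNn : N ≤ n := Nat.le_findGreatest hNK ht
  have hnK : n ≤ K := Nat.findGreatest_le K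
  have hnsucc : t < M.seed (n+1) ω := by
    by_cases h : n + 1 ≤ K
    · have hnp : ¬ p (n+1) := Nat.findGreatest_is_greatest (by omega) h
      exact not_le.1 hnp
    · push_neg at h
      exact hK (n+1) (by omega)
  have hng := hgap n hNn
  simp only [gapEvent, Set.mem_setOf_eq] at hng
  push_neg at hng
  rcases hng with ⟨i, hin, hle⟩
  refine Set.mem_iUnion.2 ⟨i, ?_⟩
  rw [Set.mem_Icc]
  have hsi : M.seed i ω ≤ M.seed n ω := hmono hin
  exact ⟨le_trans hsi hpn, by linarith⟩

end StickModel

end Final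

/-- Cauchy-type tail `x · R(x) → c`: if `λ > 1/c` the system percolates with
probability 1. -/
theorem stick_percolates_of_cauchy_tail_supercritical {Ω : Type} [MeasurableSpace Ω]
    (P : Measure Ω) [IsProbabilityMeasure P] (lam : ℝ) (hlam : 0 < lam)
    (μ : Measure ℝ) [IsProbabilityMeasure μ] (hμ : μ (Set.Ioi (0 : ℝ)) = 1)
    (M : StickModel P lam μ) (c : ℝ) (hc : 0 < c)
    (htail : Filter.Tendsto (fun x : ℝ => x * (μ (Set.Ioi x)).toReal)
      Filter.atTop (nhds c))
    (hsup : 1 / c < lam) :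
    P {ω | M.Percolates ω} = 1 := by
  classical
  set ρ := c * lam with hρdef
  have hρ : 1 < ρ := by
    rw [div_lt_iff₀ hc] at hsup
    rw [hρdef]
    nlinarith
  set δ := (ρ - 1)/4 with hδdef
  have hδ : 0 < δ := by rw [hδdef]; linarith
  set cs := (3*ρ+1)/(ρ+3) with hcsdef
  have hcs1 : 1 < cs := by
    rw [hcsdef, lt_div_iff₀ (by linarith)]
    linarith
  have hb : 0 < (1+δ)/lam := by positivity
  set ctail := c * ((3*ρ+1)/(4*ρ)) with hctdef
  have hct : ctail < c := by
    rw [hctdef]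
    have : (3*ρ+1)/(4*ρ) < 1 := by
      rw [div_lt_one (by linarith)]
      linarith
    nlinarith
  have hev : ∀ᶠ x in atTop, ctail < x * (μ (Set.Ioi x)).toReal :=
    htail.eventually (eventually_gt_nhds hct)
  rcases (eventually_atTop).1 hev with ⟨x0, hx0⟩
  set k0 := ⌈x0/((1+δ)/lam)⌉₊ + 1 with hk0def
  have hk0 : 1 ≤ k0 := by omega
  have hkey : ctail = cs * ((1+δ)/lam) := by
    rw [hctdef, hcsdef, hδdef, hρdef]
    have h1 : lam ≠ 0 := ne_of_gt hlam
    have h2 : c ≠ 0 := ne_of_gt hc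
    have h3 : c * lam + 3 ≠ 0 := by nlinarith
    field_simp
    ring
  have hF : ∀ k : ℕ, k0 ≤ k →
      (μ (Set.Iio ((1+δ)/lam * (k:ℝ)))).toReal ≤ rexp (-(cs/k)) := by
    intro k hk
    have hk1 : (1:ℝ) ≤ (k:ℝ) := by exact_mod_cast le_trans hk0 hk
    have hkpos : (0:ℝ) < (k:ℝ) := by linarith
    set u := (1+δ)/lam * (k:ℝ) with hu
    have hupos : 0 < u := by positivity
    have hx0u : x0 ≤ u := by
      have h1 : x0/((1+δ)/lam) ≤ (⌈x0/((1+δ)/lam)⌉₊ : ℝ) := Nat.le_ceil _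
      have h2 : ((⌈x0/((1+δ)/lam)⌉₊ : ℕ):ℝ) + 1 ≤ (k:ℝ) := by
        have : (k0:ℝ) ≤ (k:ℝ) := by exact_mod_cast hk
        rw [hk0def] at this
        push_cast at this
        linarith
      rw [hu]
      rw [div_le_iff₀ hb] at h1
      nlinarith
    have hR := hx0 u hx0u
    have hRlow : cs / k < (μ (Set.Ioi u)).toReal := by
      have h5 : cs * ((1+δ)/lam) < ((1+δ)/lam * (k:ℝ)) * (μ (Set.Ioi u)).toReal := by
        rw [← hkey, ← hu]
        exact hR
      have h7 : cs < (k:ℝ) * (μ (Set.Ioi u)).toReal := by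
        nlinarith [h5, hb]
      rw [div_lt_iff₀ hkpos]
      nlinarith [h7]
    have hF1 : (μ (Set.Iio u)).toReal ≤ 1 - (μ (Set.Ioi u)).toReal := by
      have hdisj : Disjoint (Set.Iio u) (Set.Ioi u) := by
        apply Set.disjoint_left.2
        intro x hx1 hx2
        rw [Set.mem_Iio] at hx1
        rw [Set.mem_Ioi] at hx2
        linarith
      have hun := measure_union (μ := μ) hdisj measurableSet_Ioi
      have hle : μ (Set.Iio u ∪ Set.Ioi u) ≤ 1 :=
        le_trans (measure_mono (Set.subset_univ _)) (by simp)
      rw [hun] at hle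
      have := ENNReal.toReal_mono (by simp) hle
      rw [ENNReal.toReal_add (measure_ne_top _ _) (measure_ne_top _ _)] at this
      simp only [ENNReal.toReal_one] at this
      linarith
    have hexp : 1 - cs/(k:ℝ) ≤ rexp (-(cs/k)) := by
      have := Real.add_one_le_exp (-(cs/(k:ℝ)))
      linarith
    linarith
  have hnogap := M.ae_eventually_no_gap hlam hδ hcs1 hk0 hF
  have htendae := M.ae_seed_tendsto hlam
  have hXpos : ∀ᵐ ω ∂P, ∀ i, 0 < M.X i ω := (ae_all_iff).2 (fun i => M.ae_X_pos hlam i)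
  have hae : ∀ᵐ ω ∂P, M.Percolates ω := by
    filter_upwards [hnogap, htendae, hXpos] with ω h1 h2 h3
    rcases (eventually_atTop).1 h1 with ⟨N, hN⟩
    exact M.percolates_of_aux ω h3 h2 N hN
  have h0 : P {ω | M.Percolates ω}ᶜ = 0 := by
    rw [ae_iff] at hae
    exact hae
  have hge : (1:ℝ≥0∞) ≤ P {ω | M.Percolates ω} := by
    have := measure_union_le (μ := P) {ω | M.Percolates ω} {ω | M.Percolates ω}ᶜ
    rw [Set.union_compl_self, measure_univ, h0, add_zero] at this
    exact this
  exact le_antisymm prob_le_one hge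
end
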